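/- arXiv:0910.5396 — 6 statements merged into one kernel-verified Lean document; each statement's English description precedes it below -/
import Mathlib

section
/- Let p, q ∈ ρ(X) lie in the same connected component of B(X) and let x, y ∈ X* lie in the same connected component of B(X). If p divides x and q divides y, then p and x lie in the same connected component of B(X); moreover the vertex set of this component is the union of the vertex set of the connected component of p in Δ(X) and the vertex set of the connected component of x in Γ(X), and d_B(p,q) − d_B(x,y) ∈ {−2, 0, 2}. -/
open SimpleGraph

/-- The set of primes dividing at least one element of `X`. -/
def rho (X : Set ℕ) : Set ℕ := {p | p.Prime ∧ ∃ x ∈ X, p ∣ x}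

/-- `X* = X \ {1}`. -/
def Xstar (X : Set ℕ) : Set ℕ := X \ {1}

/-- The bipartite divisor graph `B(X)` on the disjoint union `ρ(X) ⊔ X*`:
`p ∈ ρ(X)` and `x ∈ X*` are adjacent iff `p ∣ x`. -/
def BGraph (X : Set ℕ) : SimpleGraph (↥(rho X) ⊕ ↥(Xstar X)) where
  Adj u v :=
    match u, v with
    | Sum.inl p, Sum.inr x => (p : ℕ) ∣ (x : ℕ)
    | Sum.inr x, Sum.inl p => (p : ℕ) ∣ (x : ℕ)
    | _, _ => False
  symm := by constructor; rintro (p | x) (q | y) h <;> exact h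
  loopless := by constructor; rintro (p | x) h <;> exact h

/-- The prime vertex graph `Δ(X)` on `ρ(X)`: distinct primes `p, q` are
adjacent iff `p*q` divides some element of `X`. -/
def DeltaGraph (X : Set ℕ) : SimpleGraph ↥(rho X) where
  Adj p q := p ≠ q ∧ ∃ x ∈ X, (p : ℕ) * (q : ℕ) ∣ x
  symm := by
    constructor
    rintro p q ⟨hne, x, hx, hdvd⟩
    exact ⟨hne.symm, x, hx, by rwa [mul_comm]⟩
  loopless := by constructor; rintro p ⟨hne, -⟩; exact hne rfl

/-- The common divisor graph `Γ(X)` on `X*`: distinct `x, y` are adjacent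
iff `gcd(x, y) > 1`. -/
def GammaGraph (X : Set ℕ) : SimpleGraph ↥(Xstar X) where
  Adj x y := x ≠ y ∧ 1 < Nat.gcd (x : ℕ) (y : ℕ)
  symm := by
    constructor
    rintro x y ⟨hne, h⟩
    exact ⟨hne.symm, by rwa [Nat.gcd_comm]⟩
  loopless := by constructor; rintro x ⟨hne, -⟩; exact hne rfl

section aux
variable {X : Set ℕ}

-- two primes dividing the same element of X* are Δ-reachable
lemma delta_reach_of_dvd (a b : ↥(rho X)) (z : ↥(Xstar X))
    (ha : (a:ℕ) ∣ (z:ℕ)) (hb : (b:ℕ) ∣ (z:ℕ)) : (DeltaGraph X).Reachable a b := by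
  by_cases h : a = b
  · exact h ▸ Reachable.refl a
  · refine Adj.reachable ⟨h, (z:ℕ), z.2.1, ?_⟩
    refine (Nat.Coprime.mul_dvd_of_dvd_of_dvd ?_ ha hb)
    exact (Nat.coprime_primes a.2.1 b.2.1).mpr (fun he => h (Subtype.ext he))

-- two elements of X* divisible by the same prime are Γ-reachable
lemma gamma_reach_of_dvd (hpos : ∀ t ∈ X, 0 < t) (a : ↥(rho X)) (z w : ↥(Xstar X))
    (hz : (a:ℕ) ∣ (z:ℕ)) (hw : (a:ℕ) ∣ (w:ℕ)) : (GammaGraph X).Reachable z w := by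
  by_cases h : z = w
  · exact h ▸ Reachable.refl z
  · refine Adj.reachable ⟨h, ?_⟩
    exact lt_of_lt_of_le a.2.1.one_lt (Nat.le_of_dvd (Nat.gcd_pos_of_pos_left _ (hpos z.1 z.2.1))
      (Nat.dvd_gcd hz hw))
end aux

section aux2
variable {X : Set ℕ}

/-- Δ-info relation carried along a walk in B. -/
def QD (X : Set ℕ) : (↥(rho X) ⊕ ↥(Xstar X)) → (↥(rho X) ⊕ ↥(Xstar X)) → Prop
  | Sum.inl a, Sum.inl b => (DeltaGraph X).Reachable a b
  | Sum.inl a, Sum.inr z => ∃ s : ↥(rho X), (s:ℕ) ∣ (z:ℕ) ∧ (DeltaGraph X).Reachable a s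
  | Sum.inr z, Sum.inl b => ∃ s : ↥(rho X), (s:ℕ) ∣ (z:ℕ) ∧ (DeltaGraph X).Reachable s b
  | Sum.inr z, Sum.inr w => ∃ s t : ↥(rho X), (s:ℕ) ∣ (z:ℕ) ∧ (t:ℕ) ∣ (w:ℕ) ∧
      (DeltaGraph X).Reachable s t

lemma QD_of_walk : ∀ {u v}, (BGraph X).Walk u v → QD X u v := by
  intro u v w
  induction w with
  | @nil u =>
    rcases u with a | z
    · exact Reachable.refl a
    · obtain ⟨pp, hpp, hdvd⟩ := Nat.exists_prime_and_dvd z.2.2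
      exact ⟨⟨pp, hpp, ⟨z.1, z.2.1, hdvd⟩⟩, ⟨pp, hpp, ⟨z.1, z.2.1, hdvd⟩⟩, hdvd, hdvd, Reachable.refl _⟩
  | @cons u u' v h w ih =>
    rcases u with a | z <;> rcases u' with b | w'
    · exact absurd h (by simp [BGraph])
    · -- a ∣ w'
      have ha : (a:ℕ) ∣ (w':ℕ) := h
      rcases v with c | t
      · obtain ⟨s, hs, hr⟩ := ih
        exact (delta_reach_of_dvd a s w' ha hs).trans hr
      · obtain ⟨s, t', hs, ht', hr⟩ := ih
        exact ⟨t', ht', (delta_reach_of_dvd a s w' ha hs).trans hr⟩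
    · -- b ∣ z
      have hb : (b:ℕ) ∣ (z:ℕ) := h
      rcases v with c | t
      · exact ⟨b, hb, ih⟩
      · obtain ⟨s, hs, hr⟩ := ih
        exact ⟨b, s, hb, hs, hr⟩
    · exact absurd h (by simp [BGraph])

/-- Γ-info relation carried along a walk in B. -/
def QG (X : Set ℕ) : (↥(rho X) ⊕ ↥(Xstar X)) → (↥(rho X) ⊕ ↥(Xstar X)) → Prop
  | Sum.inl a, Sum.inl b => ∃ z w : ↥(Xstar X), (a:ℕ) ∣ (z:ℕ) ∧ (b:ℕ) ∣ (w:ℕ) ∧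
      (GammaGraph X).Reachable z w
  | Sum.inl a, Sum.inr w => ∃ z : ↥(Xstar X), (a:ℕ) ∣ (z:ℕ) ∧ (GammaGraph X).Reachable z w
  | Sum.inr z, Sum.inl b => ∃ w : ↥(Xstar X), (b:ℕ) ∣ (w:ℕ) ∧ (GammaGraph X).Reachable z w
  | Sum.inr z, Sum.inr w => (GammaGraph X).Reachable z w

lemma QG_of_walk (hpos : ∀ t ∈ X, 0 < t) :
    ∀ {u v}, (BGraph X).Walk u v → QG X u v := by
  intro u v w
  induction w with
  | @nil u =>
    rcases u with a | z
    · obtain ⟨ha, t, ht, hdvd⟩ := a.2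
      have ht1 : t ≠ 1 := by
        intro h1; rw [h1, Nat.dvd_one] at hdvd
        exact ha.one_lt.ne' hdvd
      exact ⟨⟨t, ht, ht1⟩, ⟨t, ht, ht1⟩, hdvd, hdvd, Reachable.refl _⟩
    · exact Reachable.refl z
  | @cons u u' v h w ih =>
    rcases u with a | z <;> rcases u' with b | w'
    · exact absurd h (by simp [BGraph])
    · have ha : (a:ℕ) ∣ (w':ℕ) := h
      rcases v with c | t
      · obtain ⟨s, hs, hr⟩ := ih
        exact ⟨w', s, ha, hs, hr⟩
      · exact ⟨w', ha, ih⟩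
    · have hb : (b:ℕ) ∣ (z:ℕ) := h
      rcases v with c | t
      · obtain ⟨z', w'', hz', hw'', hr⟩ := ih
        exact ⟨w'', hw'', (gamma_reach_of_dvd hpos b z z' hb hz').trans hr⟩
      · obtain ⟨z', hz', hr⟩ := ih
        exact (gamma_reach_of_dvd hpos b z z' hb hz').trans hr
    · exact absurd h (by simp [BGraph])

lemma B_reach_of_delta {a b : ↥(rho X)} (h : (DeltaGraph X).Reachable a b)
    (hpos : ∀ t ∈ X, 0 < t) :
    (BGraph X).Reachable (Sum.inl a) (Sum.inl b) := by
  obtain ⟨w⟩ := h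
  induction w with
  | nil => exact Reachable.refl _
  | @cons c d e hadj w ih =>
    obtain ⟨hne, t, ht, hdvd⟩ := hadj
    have ht1 : t ≠ 1 := by
      intro h1; rw [h1, Nat.dvd_one] at hdvd
      have := c.2.1.one_lt
      nlinarith [d.2.1.one_lt, Nat.le_of_eq hdvd]
    have tmem : t ∈ Xstar X := ⟨ht, ht1⟩
    have h1 : (BGraph X).Adj (Sum.inl c) (Sum.inr ⟨t, tmem⟩) :=
      dvd_trans (Dvd.intro _ rfl) hdvd
    have h2 : (BGraph X).Adj (Sum.inr ⟨t, tmem⟩) (Sum.inl d) :=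
      dvd_trans (Dvd.intro_left _ rfl) hdvd
    exact (h1.reachable.trans h2.reachable).trans ih

lemma B_reach_of_gamma {z w : ↥(Xstar X)} (h : (GammaGraph X).Reachable z w) :
    (BGraph X).Reachable (Sum.inr z) (Sum.inr w) := by
  obtain ⟨wk⟩ := h
  induction wk with
  | nil => exact Reachable.refl _
  | @cons c d e hadj wk ih =>
    obtain ⟨hne, hgcd⟩ := hadj
    obtain ⟨pp, hpp, hdvd⟩ := Nat.exists_prime_and_dvd (hgcd.ne')
    have hdc : pp ∣ (c:ℕ) := hdvd.trans (Nat.gcd_dvd_left _ _)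
    have hdd : pp ∣ (d:ℕ) := hdvd.trans (Nat.gcd_dvd_right _ _)
    have pmem : pp ∈ rho X := ⟨hpp, c.1, c.2.1, hdc⟩
    have h1 : (BGraph X).Adj (Sum.inr c) (Sum.inl ⟨pp, pmem⟩) := hdc
    have h2 : (BGraph X).Adj (Sum.inl ⟨pp, pmem⟩) (Sum.inr d) := hdd
    exact (h1.reachable.trans h2.reachable).trans ih

/-- parity function -/
def par : (↥(rho X) ⊕ ↥(Xstar X)) → ZMod 2
  | Sum.inl _ => 0
  | Sum.inr _ => 1

lemma walk_length_par : ∀ {u v}, (w : (BGraph X).Walk u v) →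
    (w.length : ZMod 2) = par u + par v := by
  intro u v w
  induction w with
  | @nil u => rcases u with a | z <;> simp [par] <;> decide
  | @cons u u' v h w ih =>
    rw [SimpleGraph.Walk.length_cons]
    push_cast
    rw [ih]
    rcases u with a | z <;> rcases u' with b | w'
    · exact absurd h (by simp [BGraph])
    · generalize par v = c
      simp only [par]
      revert c
      decide
    · generalize par v = c
      simp only [par]
      revert c
      decide
    · exact absurd h (by simp [BGraph])
end aux2

theorem stmt_3 (X : Set ℕ) (hne : X.Nonempty) (hpos : ∀ x ∈ X, 0 < x)
    (hX1 : X ≠ {1}) (p q : ↥(rho X)) (x y : ↥(Xstar X))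
    (hpq : (BGraph X).Reachable (Sum.inl p) (Sum.inl q))
    (hxy : (BGraph X).Reachable (Sum.inr x) (Sum.inr y))
    (hpx : (p : ℕ) ∣ (x : ℕ)) (hqy : (q : ℕ) ∣ (y : ℕ)) :
    (BGraph X).Reachable (Sum.inl p) (Sum.inr x) ∧
    (∀ v : ↥(rho X) ⊕ ↥(Xstar X),
      (BGraph X).Reachable v (Sum.inl p) ↔
        ((∃ r : ↥(rho X), v = Sum.inl r ∧ (DeltaGraph X).Reachable r p) ∨
         (∃ z : ↥(Xstar X), v = Sum.inr z ∧ (GammaGraph X).Reachable z x))) ∧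
    (((BGraph X).dist (Sum.inl p) (Sum.inl q) : ℤ) -
        ((BGraph X).dist (Sum.inr x) (Sum.inr y) : ℤ) ∈ ({-2, 0, 2} : Set ℤ)) := by
  have hA : (BGraph X).Adj (Sum.inl p) (Sum.inr x) := hpx
  refine ⟨hA.reachable, ?_, ?_⟩
  · intro v
    constructor
    · intro hv
      rcases v with r | z
      · exact Or.inl ⟨r, rfl, QD_of_walk hv.some⟩
      · exact Or.inr ⟨z, rfl, QG_of_walk hpos (hv.trans hA.reachable).some⟩
    · rintro (⟨r, rfl, hr⟩ | ⟨z, rfl, hz⟩)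
      · exact B_reach_of_delta hr hpos
      · exact (B_reach_of_gamma hz).trans hA.symm.reachable
  · obtain ⟨w1, hw1⟩ := hpq.exists_walk_length_eq_dist
    obtain ⟨w2, hw2⟩ := hxy.exists_walk_length_eq_dist
    have hxp : (BGraph X).Adj (Sum.inr x) (Sum.inl p) := hpx
    have hqy' : (BGraph X).Adj (Sum.inl q) (Sum.inr y) := hqy
    have hb1 : (BGraph X).dist (Sum.inr x) (Sum.inr y) ≤
        (BGraph X).dist (Sum.inl p) (Sum.inl q) + 2 := by
      have h := SimpleGraph.dist_le (Walk.cons hxp (w1.concat hqy'))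
      rw [Walk.length_cons, Walk.length_concat, hw1] at h
      omega
    have hb2 : (BGraph X).dist (Sum.inl p) (Sum.inl q) ≤
        (BGraph X).dist (Sum.inr x) (Sum.inr y) + 2 := by
      have h := SimpleGraph.dist_le (Walk.cons hA (w2.concat hqy'.symm))
      rw [Walk.length_cons, Walk.length_concat, hw2] at h
      omega
    have he1 : 2 ∣ (BGraph X).dist (Sum.inl p) (Sum.inl q) := by
      rw [← hw1]
      rw [← ZMod.natCast_eq_zero_iff]
      rw [walk_length_par w1]
      rfl
    have he2 : 2 ∣ (BGraph X).dist (Sum.inr x) (Sum.inr y) := by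
      rw [← hw2]
      rw [← ZMod.natCast_eq_zero_iff]
      rw [walk_length_par w2]
      rfl
    simp only [Set.mem_insert_iff, Set.mem_singleton_iff]
    omega
end

section
/- The graphs B(X), Δ(X) and Γ(X) have equal numbers of connected components: n(B(X)) = n(Δ(X)) = n(Γ(X)). -/
open SimpleGraph

/-- A chosen prime vertex for each `x ∈ X*`. -/
noncomputable def fBD (X : Set ℕ) : ↥(rho X) ⊕ ↥(Xstar X) → ↥(rho X)
  | Sum.inl p => p
  | Sum.inr x => ⟨Nat.minFac x, Nat.minFac_prime x.2.2, x, x.2.1, Nat.minFac_dvd _⟩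

lemma delta_reach (X : Set ℕ) (p q : ↥(rho X)) {x : ℕ} (hx : x ∈ X)
    (hp : (p : ℕ) ∣ x) (hq : (q : ℕ) ∣ x) : (DeltaGraph X).Reachable p q := by
  by_cases h : p = q
  · exact h ▸ SimpleGraph.Reachable.refl p
  · have hc : (p : ℕ) ≠ (q : ℕ) := fun hc => h (Subtype.ext hc)
    exact SimpleGraph.Adj.reachable
      ⟨h, x, hx, ((Nat.coprime_primes p.2.1 q.2.1).mpr hc).mul_dvd_of_dvd_of_dvd hp hq⟩

/-- A chosen element vertex for each prime `p ∈ ρ(X)`. -/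
noncomputable def fBG (X : Set ℕ) : ↥(rho X) ⊕ ↥(Xstar X) → ↥(Xstar X)
  | Sum.inr x => x
  | Sum.inl p => ⟨Classical.choose p.2.2, (Classical.choose_spec p.2.2).1, by
      intro h
      have hd := (Classical.choose_spec p.2.2).2
      rw [Set.mem_singleton_iff.mp h] at hd
      exact p.2.1.one_lt.ne' (Nat.dvd_one.mp hd)⟩

lemma fBG_dvd (X : Set ℕ) (p : ↥(rho X)) : (p : ℕ) ∣ (fBG X (Sum.inl p) : ℕ) :=
  (Classical.choose_spec p.2.2).2

lemma gamma_reach (X : Set ℕ) (x y : ↥(Xstar X)) {p : ℕ} (hp : p.Prime)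
    (hx : p ∣ (x : ℕ)) (hy : p ∣ (y : ℕ)) : (GammaGraph X).Reachable x y := by
  by_cases h : x = y
  · exact h ▸ SimpleGraph.Reachable.refl x
  · have hg : p ∣ Nat.gcd (x : ℕ) (y : ℕ) := Nat.dvd_gcd hx hy
    have hg0 : Nat.gcd (x : ℕ) (y : ℕ) ≠ 0 := by
      intro h0
      obtain ⟨h1, h2⟩ := Nat.gcd_eq_zero_iff.mp h0
      exact h (Subtype.ext (h1.trans h2.symm))
    exact SimpleGraph.Adj.reachable
      ⟨h, lt_of_lt_of_le hp.one_lt (Nat.le_of_dvd (Nat.pos_of_ne_zero hg0) hg)⟩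
lemma walk_lift {V : Type*} {β : Sort*} {G : SimpleGraph V} (f : V → β)
    (h : ∀ v w, G.Adj v w → f v = f w) : ∀ v w, G.Walk v w → f v = f w := by
  intro v w p
  induction p with
  | nil => rfl
  | cons a _ ih => exact (h _ _ a).trans ih

theorem stmt_4 (X : Set ℕ) (hne : X.Nonempty) (hpos : ∀ x ∈ X, 0 < x)
    (hX1 : X ≠ {1}) :
    Nonempty ((BGraph X).ConnectedComponent ≃ (DeltaGraph X).ConnectedComponent) ∧
    Nonempty ((BGraph X).ConnectedComponent ≃ (GammaGraph X).ConnectedComponent) := by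
  classical
  constructor
  · -- B ≃ Δ
    refine ⟨{
      toFun := SimpleGraph.ConnectedComponent.lift
        (fun u => (DeltaGraph X).connectedComponentMk (fBD X u))
        (fun v w p _ => walk_lift (fun u => (DeltaGraph X).connectedComponentMk (fBD X u)) ?_ v w p)
      invFun := SimpleGraph.ConnectedComponent.lift
        (fun p => (BGraph X).connectedComponentMk (Sum.inl p))
        (fun v w p _ => walk_lift (fun q => (BGraph X).connectedComponentMk (Sum.inl q)) ?_ v w p)
      left_inv := ?_
      right_inv := ?_ }⟩
    · rintro (p | x) (q | y) h <;> try exact absurd h not_false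
      · -- inl p — inr y : p ∣ y
        exact SimpleGraph.ConnectedComponent.sound
          (delta_reach X p (fBD X (Sum.inr y)) y.2.1 h (Nat.minFac_dvd _))
      · exact SimpleGraph.ConnectedComponent.sound
          (delta_reach X (fBD X (Sum.inr x)) q x.2.1 (Nat.minFac_dvd _) h)
    · rintro p q ⟨hpq, x, hx, hd⟩
      have hp : (p : ℕ) ∣ x := dvd_trans (Dvd.intro _ rfl) hd
      have hq : (q : ℕ) ∣ x := dvd_trans (Dvd.intro_left _ rfl) hd
      have hx1 : x ∉ ({1} : Set ℕ) := by
        intro h1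
        rw [Set.mem_singleton_iff.mp h1] at hp
        exact p.2.1.one_lt.ne' (Nat.dvd_one.mp hp)
      have h1 : (BGraph X).Adj (Sum.inl p) (Sum.inr ⟨x, hx, hx1⟩) := hp
      have h2 : (BGraph X).Adj (Sum.inr (⟨x, hx, hx1⟩ : ↥(Xstar X))) (Sum.inl q) := hq
      exact SimpleGraph.ConnectedComponent.sound (h1.reachable.trans h2.reachable)
    · refine SimpleGraph.ConnectedComponent.ind ?_
      rintro (p | x)
      · rfl
      · exact SimpleGraph.ConnectedComponent.sound
          (SimpleGraph.Adj.reachable (show ((fBD X (Sum.inr x) : ℕ)) ∣ (x : ℕ) from Nat.minFac_dvd _))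
    · exact SimpleGraph.ConnectedComponent.ind (fun p => rfl)
  · -- B ≃ Γ
    refine ⟨{
      toFun := SimpleGraph.ConnectedComponent.lift
        (fun u => (GammaGraph X).connectedComponentMk (fBG X u))
        (fun v w p _ => walk_lift (fun u => (GammaGraph X).connectedComponentMk (fBG X u)) ?_ v w p)
      invFun := SimpleGraph.ConnectedComponent.lift
        (fun x => (BGraph X).connectedComponentMk (Sum.inr x))
        (fun v w p _ => walk_lift (fun y => (BGraph X).connectedComponentMk (Sum.inr y)) ?_ v w p)
      left_inv := ?_
      right_inv := ?_ }⟩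
    · rintro (p | x) (q | y) h <;> try exact absurd h not_false
      · exact SimpleGraph.ConnectedComponent.sound
          (gamma_reach X (fBG X (Sum.inl p)) y p.2.1 (fBG_dvd X p) h)
      · exact SimpleGraph.ConnectedComponent.sound
          (gamma_reach X x (fBG X (Sum.inl q)) q.2.1 h (fBG_dvd X q))
    · rintro x y ⟨hxy, hg⟩
      set d := Nat.gcd (x : ℕ) (y : ℕ) with hd
      have hdp : (Nat.minFac d).Prime := Nat.minFac_prime (by omega)
      have hpx : Nat.minFac d ∣ (x : ℕ) := (Nat.minFac_dvd d).trans (Nat.gcd_dvd_left _ _)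
      have hpy : Nat.minFac d ∣ (y : ℕ) := (Nat.minFac_dvd d).trans (Nat.gcd_dvd_right _ _)
      have hpr : Nat.minFac d ∈ rho X := ⟨hdp, x, x.2.1, hpx⟩
      have h1 : (BGraph X).Adj (Sum.inr x) (Sum.inl ⟨Nat.minFac d, hpr⟩) := hpx
      have h2 : (BGraph X).Adj (Sum.inl (⟨Nat.minFac d, hpr⟩ : ↥(rho X))) (Sum.inr y) := hpy
      exact SimpleGraph.ConnectedComponent.sound (h1.reachable.trans h2.reachable)
    · refine SimpleGraph.ConnectedComponent.ind ?_
      rintro (p | x)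
      · exact SimpleGraph.ConnectedComponent.sound
          (SimpleGraph.Adj.reachable
            (show (p : ℕ) ∣ ((fBG X (Sum.inl p) : ℕ)) from fBG_dvd X p)).symm
      · rfl
    · exact SimpleGraph.ConnectedComponent.ind (fun x => rfl)
end

section
/- Let X be finite. Then either (i) diam(B(X)) = 2·max{diam(Δ(X)), diam(Γ(X))} and |diam(Δ(X)) − diam(Γ(X))| ≤ 1, or (ii) diam(Δ(X)) = diam(Γ(X)) = (diam(B(X)) − 1)/2. -/
open SimpleGraph

/-- The diameter of a graph in the sense of Lewis: the maximum of the distances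
between pairs of vertices lying in the same connected component. -/
noncomputable def gdiam {V : Type*} (G : SimpleGraph V) : ℕ :=
  sSup {n : ℕ | ∃ u v : V, G.Reachable u v ∧ G.dist u v = n}

/-! ### Auxiliary lemmas -/

section Aux

lemma aux_dist_tri {V : Type*} {G : SimpleGraph V} {u v w : V}
    (h1 : G.Reachable u v) (h2 : G.Reachable v w) :
    G.dist u w ≤ G.dist u v + G.dist v w := by
  obtain ⟨p, hp⟩ := h1.exists_walk_length_eq_dist
  obtain ⟨q, hq⟩ := h2.exists_walk_length_eq_dist
  calc G.dist u w ≤ (p.append q).length := SimpleGraph.dist_le _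
    _ = _ := by rw [Walk.length_append, hp, hq]

lemma aux_gdiam_bdd {V : Type*} [Finite V] (G : SimpleGraph V) :
    BddAbove {n : ℕ | ∃ u v : V, G.Reachable u v ∧ G.dist u v = n} := by
  apply Set.Finite.bddAbove
  apply Set.Finite.subset (Set.finite_range (fun z : V × V => G.dist z.1 z.2))
  rintro n ⟨u, v, -, rfl⟩
  exact ⟨(u, v), rfl⟩

lemma aux_le_gdiam {V : Type*} [Finite V] (G : SimpleGraph V) {u v : V}
    (h : G.Reachable u v) : G.dist u v ≤ gdiam G :=
  le_csSup (aux_gdiam_bdd G) ⟨u, v, h, rfl⟩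

lemma aux_gdiam_spec {V : Type*} [Finite V] [Nonempty V] (G : SimpleGraph V) :
    ∃ u v : V, G.Reachable u v ∧ G.dist u v = gdiam G := by
  have hne : {n : ℕ | ∃ u v : V, G.Reachable u v ∧ G.dist u v = n}.Nonempty := by
    obtain ⟨u⟩ := ‹Nonempty V›
    exact ⟨G.dist u u, u, u, Reachable.refl u, rfl⟩
  exact Nat.sSup_mem hne (aux_gdiam_bdd G)

variable {X : Set ℕ}

lemma aux_mem_Xstar_of_prime_dvd {p x : ℕ} (hp : p.Prime) (hd : p ∣ x) (hx : x ∈ X) :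
    x ∈ Xstar X := by
  refine ⟨hx, fun h => ?_⟩
  subst h
  exact hp.one_lt.not_ge (Nat.le_of_dvd one_pos hd)

lemma aux_delta_to_B {p q : ↥(rho X)} (w : (DeltaGraph X).Walk p q) :
    ∃ W : (BGraph X).Walk (Sum.inl p) (Sum.inl q), W.length = 2 * w.length := by
  induction w with
  | nil => exact ⟨.nil, rfl⟩
  | @cons p r q h w ih =>
    obtain ⟨W, hW⟩ := ih
    obtain ⟨hne, x, hxX, hdvd⟩ := h
    have hpx : (p : ℕ) ∣ x := (dvd_mul_right _ _).trans hdvd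
    have hrx : (r : ℕ) ∣ x := (dvd_mul_left _ _).trans hdvd
    have hx1 : x ∈ Xstar X := aux_mem_Xstar_of_prime_dvd p.2.1 hpx hxX
    have h1 : (BGraph X).Adj (Sum.inl p) (Sum.inr ⟨x, hx1⟩) := hpx
    have h2 : (BGraph X).Adj (Sum.inr (⟨x, hx1⟩ : ↥(Xstar X))) (Sum.inl r) := hrx
    refine ⟨.cons h1 (.cons h2 W), ?_⟩
    show W.length + 1 + 1 = 2 * (w.length + 1); omega

lemma aux_gamma_to_B (hpos : ∀ x ∈ X, 0 < x) {x y : ↥(Xstar X)}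
    (w : (GammaGraph X).Walk x y) :
    ∃ W : (BGraph X).Walk (Sum.inr x) (Sum.inr y), W.length = 2 * w.length := by
  induction w with
  | nil => exact ⟨.nil, rfl⟩
  | @cons x z y h w ih =>
    obtain ⟨W, hW⟩ := ih
    obtain ⟨hne, hgcd⟩ := h
    set g := Nat.gcd (x : ℕ) (z : ℕ) with hg
    have hgp : g.minFac.Prime := Nat.minFac_prime (by omega)
    have hdx : g.minFac ∣ (x : ℕ) := (Nat.minFac_dvd g).trans (Nat.gcd_dvd_left _ _)
    have hdz : g.minFac ∣ (z : ℕ) := (Nat.minFac_dvd g).trans (Nat.gcd_dvd_right _ _)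
    have hp : g.minFac ∈ rho X := ⟨hgp, x, x.2.1, hdx⟩
    have h1 : (BGraph X).Adj (Sum.inr x) (Sum.inl ⟨g.minFac, hp⟩) := hdx
    have h2 : (BGraph X).Adj (Sum.inl (⟨g.minFac, hp⟩ : ↥(rho X))) (Sum.inr z) := hdz
    refine ⟨.cons h1 (.cons h2 W), ?_⟩
    show W.length + 1 + 1 = 2 * (w.length + 1); omega

lemma aux_B_to_delta {p q : ↥(rho X)} (w : (BGraph X).Walk (Sum.inl p) (Sum.inl q)) :
    ∃ w' : (DeltaGraph X).Walk p q, 2 * w'.length ≤ w.length := by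
  generalize hn : w.length = n
  induction n using Nat.strong_induction_on generalizing p with
  | _ n ih =>
    cases w with
    | nil => exact ⟨.nil, by simp⟩
    | @cons _ b _ h w1 =>
      cases b with
      | inl r => exact absurd h (by simp [BGraph])
      | inr x =>
        cases w1 with
        | @cons _ c _ h2 w2 =>
          cases c with
          | inr y => exact absurd h2 (by simp [BGraph])
          | inl r =>
            have hlen : w2.length + 2 = n := by simpa using hn
            obtain ⟨w', hw'⟩ := ih w2.length (by omega) (p := r) w2 rfl
            by_cases hpr : p = r
            · subst hpr; exact ⟨w', by omega⟩
            · have hpx : (p : ℕ) ∣ (x : ℕ) := h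
              have hrx : (r : ℕ) ∣ (x : ℕ) := h2
              have hcop : Nat.Coprime (p : ℕ) (r : ℕ) :=
                (Nat.coprime_primes p.2.1 r.2.1).mpr
                  (fun hc => hpr (Subtype.ext hc))
              have hadj : (DeltaGraph X).Adj p r :=
                ⟨hpr, x, x.2.1, hcop.mul_dvd_of_dvd_of_dvd hpx hrx⟩
              exact ⟨.cons hadj w', by simp [Walk.length_cons]; omega⟩

lemma aux_B_to_gamma (hpos : ∀ x ∈ X, 0 < x) {x y : ↥(Xstar X)}
    (w : (BGraph X).Walk (Sum.inr x) (Sum.inr y)) :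
    ∃ w' : (GammaGraph X).Walk x y, 2 * w'.length ≤ w.length := by
  generalize hn : w.length = n
  induction n using Nat.strong_induction_on generalizing x with
  | _ n ih =>
    cases w with
    | nil => exact ⟨.nil, by simp⟩
    | @cons _ b _ h w1 =>
      cases b with
      | inr z => exact absurd h (by simp [BGraph])
      | inl p =>
        cases w1 with
        | @cons _ c _ h2 w2 =>
          cases c with
          | inl r => exact absurd h2 (by simp [BGraph])
          | inr z =>
            have hlen : w2.length + 2 = n := by simpa using hn
            obtain ⟨w', hw'⟩ := ih w2.length (by omega) (x := z) w2 rfl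
            by_cases hxz : x = z
            · subst hxz; exact ⟨w', by omega⟩
            · have hpx : (p : ℕ) ∣ (x : ℕ) := h
              have hpz : (p : ℕ) ∣ (z : ℕ) := h2
              have hxpos : 0 < (x : ℕ) := hpos _ x.2.1
              have hgcd : 1 < Nat.gcd (x : ℕ) (z : ℕ) :=
                lt_of_lt_of_le p.2.1.one_lt
                  (Nat.le_of_dvd (Nat.gcd_pos_of_pos_left _ hxpos)
                    (Nat.dvd_gcd hpx hpz))
              have hadj : (GammaGraph X).Adj x z := ⟨hxz, hgcd⟩
              exact ⟨.cons hadj w', by simp [Walk.length_cons]; omega⟩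

lemma aux_reach_inl {p q : ↥(rho X)} :
    (BGraph X).Reachable (Sum.inl p) (Sum.inl q) ↔ (DeltaGraph X).Reachable p q := by
  constructor
  · intro h
    obtain ⟨w⟩ := h
    obtain ⟨w', -⟩ := aux_B_to_delta w
    exact ⟨w'⟩
  · intro h
    obtain ⟨w⟩ := h
    obtain ⟨W, -⟩ := aux_delta_to_B w
    exact ⟨W⟩

lemma aux_reach_inr (hpos : ∀ x ∈ X, 0 < x) {x y : ↥(Xstar X)} :
    (BGraph X).Reachable (Sum.inr x) (Sum.inr y) ↔ (GammaGraph X).Reachable x y := by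
  constructor
  · intro h
    obtain ⟨w⟩ := h
    obtain ⟨w', -⟩ := aux_B_to_gamma hpos w
    exact ⟨w'⟩
  · intro h
    obtain ⟨w⟩ := h
    obtain ⟨W, -⟩ := aux_gamma_to_B hpos w
    exact ⟨W⟩

lemma aux_dist_inl {p q : ↥(rho X)} :
    (BGraph X).dist (Sum.inl p) (Sum.inl q) = 2 * (DeltaGraph X).dist p q := by
  by_cases h : (DeltaGraph X).Reachable p q
  · apply le_antisymm
    · obtain ⟨w, hw⟩ := h.exists_walk_length_eq_dist
      obtain ⟨W, hW⟩ := aux_delta_to_B w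
      calc (BGraph X).dist _ _ ≤ W.length := SimpleGraph.dist_le W
        _ = 2 * (DeltaGraph X).dist p q := by rw [hW, hw]
    · have hB := aux_reach_inl.mpr h
      obtain ⟨W, hW⟩ := hB.exists_walk_length_eq_dist
      obtain ⟨w', hw'⟩ := aux_B_to_delta W
      have := SimpleGraph.dist_le w'
      omega
  · rw [SimpleGraph.dist_eq_zero_of_not_reachable h,
      SimpleGraph.dist_eq_zero_of_not_reachable (fun hc => h (aux_reach_inl.mp hc))]

lemma aux_dist_inr (hpos : ∀ x ∈ X, 0 < x) {x y : ↥(Xstar X)} :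
    (BGraph X).dist (Sum.inr x) (Sum.inr y) = 2 * (GammaGraph X).dist x y := by
  by_cases h : (GammaGraph X).Reachable x y
  · apply le_antisymm
    · obtain ⟨w, hw⟩ := h.exists_walk_length_eq_dist
      obtain ⟨W, hW⟩ := aux_gamma_to_B hpos w
      calc (BGraph X).dist _ _ ≤ W.length := SimpleGraph.dist_le W
        _ = 2 * (GammaGraph X).dist x y := by rw [hW, hw]
    · have hB := (aux_reach_inr hpos).mpr h
      obtain ⟨W, hW⟩ := hB.exists_walk_length_eq_dist
      obtain ⟨w', hw'⟩ := aux_B_to_gamma hpos W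
      have := SimpleGraph.dist_le w'
      omega
  · rw [SimpleGraph.dist_eq_zero_of_not_reachable h,
      SimpleGraph.dist_eq_zero_of_not_reachable (fun hc => h ((aux_reach_inr hpos).mp hc))]

lemma aux_rho_finite (hfin : X.Finite) (hpos : ∀ x ∈ X, 0 < x) : (rho X).Finite := by
  apply Set.Finite.subset (Set.Finite.biUnion hfin (fun x _ => Set.finite_Iic x))
  rintro p ⟨hp, x, hx, hd⟩
  exact Set.mem_biUnion hx (Nat.le_of_dvd (hpos x hx) hd)

end Aux

theorem stmt_5 (X : Set ℕ) (hne : X.Nonempty) (hpos : ∀ x ∈ X, 0 < x)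
    (hX1 : X ≠ {1}) (hfin : X.Finite) :
    (gdiam (BGraph X) = 2 * max (gdiam (DeltaGraph X)) (gdiam (GammaGraph X)) ∧
      ((gdiam (DeltaGraph X) : ℤ) - (gdiam (GammaGraph X) : ℤ)).natAbs ≤ 1) ∨
    (gdiam (DeltaGraph X) = gdiam (GammaGraph X) ∧
      2 * gdiam (DeltaGraph X) + 1 = gdiam (BGraph X)) := by
  classical
  -- finiteness instances
  haveI : Finite ↥(rho X) := (aux_rho_finite hfin hpos).to_subtype
  haveI : Finite ↥(Xstar X) := (hfin.subset Set.diff_subset).to_subtype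
  -- an element of X distinct from 1
  obtain ⟨x₀, hx₀X, hx₀1⟩ : ∃ x ∈ X, x ≠ 1 := by
    by_contra hc
    push_neg at hc
    apply hX1
    ext y
    constructor
    · intro hy; exact hc y hy
    · intro hy
      obtain ⟨z, hz⟩ := hne
      simp only [Set.mem_singleton_iff] at hy
      rw [hy, ← hc z hz]; exact hz
  have hx₀2 : 2 ≤ x₀ := by have := hpos x₀ hx₀X; omega
  have hx₀star : x₀ ∈ Xstar X := ⟨hx₀X, hx₀1⟩
  have hp₀ : x₀.minFac ∈ rho X := ⟨Nat.minFac_prime hx₀1, x₀, hx₀X, Nat.minFac_dvd x₀⟩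
  haveI : Nonempty ↥(rho X) := ⟨⟨x₀.minFac, hp₀⟩⟩
  haveI : Nonempty ↥(Xstar X) := ⟨⟨x₀, hx₀star⟩⟩
  obtain ⟨m, hm⟩ : ∃ m, m = max (gdiam (DeltaGraph X)) (gdiam (GammaGraph X)) := ⟨_, rfl⟩
  have hmΔ : gdiam (DeltaGraph X) ≤ m := hm ▸ le_max_left _ _
  have hmΓ : gdiam (GammaGraph X) ≤ m := hm ▸ le_max_right _ _
  have hmor : m = gdiam (DeltaGraph X) ∨ m = gdiam (GammaGraph X) := hm ▸ max_choice _ _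
  -- helper: every x ∈ Xstar has a prime factor in rho
  have minfac_rho : ∀ x : ↥(Xstar X), (x : ℕ).minFac ∈ rho X := fun x =>
    ⟨Nat.minFac_prime x.2.2, x, x.2.1, Nat.minFac_dvd _⟩
  -- (1) 2 * gdiam (DeltaGraph X) ≤ gdiam (BGraph X)
  have hΔB : 2 * gdiam (DeltaGraph X) ≤ gdiam (BGraph X) := by
    obtain ⟨p, q, hr, hd⟩ := aux_gdiam_spec (DeltaGraph X)
    have := aux_le_gdiam (BGraph X) (aux_reach_inl.mpr hr)
    rw [aux_dist_inl, hd] at this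
    exact this
  have hΓB : 2 * gdiam (GammaGraph X) ≤ gdiam (BGraph X) := by
    obtain ⟨x, y, hr, hd⟩ := aux_gdiam_spec (GammaGraph X)
    have := aux_le_gdiam (BGraph X) ((aux_reach_inr hpos).mpr hr)
    rw [aux_dist_inr hpos, hd] at this
    exact this
  -- (2) gdiam (BGraph X) ≤ 2 * m + 1
  have hBle : gdiam (BGraph X) ≤ 2 * m + 1 := by
    obtain ⟨u, v, hr, hd⟩ := aux_gdiam_spec (BGraph X)
    rw [← hd]
    -- mixed bound helper
    have mixed : ∀ (p : ↥(rho X)) (x : ↥(Xstar X)),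
        (BGraph X).Reachable (Sum.inl p) (Sum.inr x) →
        (BGraph X).dist (Sum.inl p) (Sum.inr x) ≤ 2 * m + 1 := by
      intro p x hrx
      set q : ↥(rho X) := ⟨(x : ℕ).minFac, minfac_rho x⟩ with hq
      have hadj : (BGraph X).Adj (Sum.inr x) (Sum.inl q) := Nat.minFac_dvd _
      have hr1 : (BGraph X).Reachable (Sum.inl p) (Sum.inl q) :=
        hrx.trans hadj.reachable
      have htri := aux_dist_tri hr1 hadj.symm.reachable
      have hle1 : (BGraph X).dist (Sum.inl q) (Sum.inr x) ≤ 1 := by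
        simpa using SimpleGraph.dist_le (Walk.cons hadj.symm Walk.nil)
      have hdq : (BGraph X).dist (Sum.inl p) (Sum.inl q)
          = 2 * (DeltaGraph X).dist p q := aux_dist_inl
      have hdd : (DeltaGraph X).dist p q ≤ gdiam (DeltaGraph X) :=
        aux_le_gdiam _ (aux_reach_inl.mp hr1)
      have hmm := hmΔ
      omega
    match u, v with
    | Sum.inl p, Sum.inl q =>
      rw [aux_dist_inl]
      have hdd : (DeltaGraph X).dist p q ≤ gdiam (DeltaGraph X) :=
        aux_le_gdiam _ (aux_reach_inl.mp hr)
      have := hmΔ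
      omega
    | Sum.inr x, Sum.inr y =>
      rw [aux_dist_inr hpos]
      have hdd : (GammaGraph X).dist x y ≤ gdiam (GammaGraph X) :=
        aux_le_gdiam _ ((aux_reach_inr hpos).mp hr)
      have := hmΓ
      omega
    | Sum.inl p, Sum.inr x => exact mixed p x hr
    | Sum.inr x, Sum.inl p =>
      rw [SimpleGraph.dist_comm]
      exact mixed p x hr.symm
  -- (3) |gdiam (DeltaGraph X) - gdiam (GammaGraph X)| ≤ 1
  have hΔΓ : gdiam (DeltaGraph X) ≤ gdiam (GammaGraph X) + 1 := by
    rcases Nat.eq_zero_or_pos (gdiam (DeltaGraph X)) with h0 | hpos'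
    · omega
    obtain ⟨p, q, hr, hd⟩ := aux_gdiam_spec (DeltaGraph X)
    obtain ⟨xp, hxpX, hxpd⟩ := p.2.2
    obtain ⟨xq, hxqX, hxqd⟩ := q.2.2
    have hxp : xp ∈ Xstar X := aux_mem_Xstar_of_prime_dvd p.2.1 hxpd hxpX
    have hxq : xq ∈ Xstar X := aux_mem_Xstar_of_prime_dvd q.2.1 hxqd hxqX
    have ha1 : (BGraph X).Adj (Sum.inl p) (Sum.inr ⟨xp, hxp⟩) := hxpd
    have ha2 : (BGraph X).Adj (Sum.inl q) (Sum.inr ⟨xq, hxq⟩) := hxqd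
    have hrB : (BGraph X).Reachable (Sum.inl p) (Sum.inl q) := aux_reach_inl.mpr hr
    have hrxy : (BGraph X).Reachable (Sum.inr (⟨xp, hxp⟩ : ↥(Xstar X)))
        (Sum.inr (⟨xq, hxq⟩ : ↥(Xstar X))) :=
      (ha1.symm.reachable.trans hrB).trans ha2.reachable
    have htri := aux_dist_tri ha1.reachable hrxy
    have htri2 := aux_dist_tri (ha1.reachable.trans hrxy) ha2.symm.reachable
    have hle1 : (BGraph X).dist (Sum.inl p) (Sum.inr ⟨xp, hxp⟩) ≤ 1 := by
      simpa using SimpleGraph.dist_le (Walk.cons ha1 Walk.nil)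
    have hle2 : (BGraph X).dist (Sum.inr (⟨xq, hxq⟩ : ↥(Xstar X))) (Sum.inl q) ≤ 1 := by
      simpa using SimpleGraph.dist_le (Walk.cons ha2.symm Walk.nil)
    have hdpq : (BGraph X).dist (Sum.inl p) (Sum.inl q)
        = 2 * (DeltaGraph X).dist p q := aux_dist_inl
    have hdxy : (BGraph X).dist (Sum.inr (⟨xp, hxp⟩ : ↥(Xstar X)))
        (Sum.inr (⟨xq, hxq⟩ : ↥(Xstar X)))
        = 2 * (GammaGraph X).dist ⟨xp, hxp⟩ ⟨xq, hxq⟩ := aux_dist_inr hpos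
    have hgle : (GammaGraph X).dist ⟨xp, hxp⟩ ⟨xq, hxq⟩ ≤ gdiam (GammaGraph X) :=
      aux_le_gdiam _ ((aux_reach_inr hpos).mp hrxy)
    omega
  have hΓΔ : gdiam (GammaGraph X) ≤ gdiam (DeltaGraph X) + 1 := by
    rcases Nat.eq_zero_or_pos (gdiam (GammaGraph X)) with h0 | hpos'
    · omega
    obtain ⟨x, y, hr, hd⟩ := aux_gdiam_spec (GammaGraph X)
    set p : ↥(rho X) := ⟨(x : ℕ).minFac, minfac_rho x⟩ with hpdef
    set q : ↥(rho X) := ⟨(y : ℕ).minFac, minfac_rho y⟩ with hqdef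
    have ha1 : (BGraph X).Adj (Sum.inr x) (Sum.inl p) := Nat.minFac_dvd _
    have ha2 : (BGraph X).Adj (Sum.inr y) (Sum.inl q) := Nat.minFac_dvd _
    have hrB : (BGraph X).Reachable (Sum.inr x) (Sum.inr y) :=
      (aux_reach_inr hpos).mpr hr
    have hrpq : (BGraph X).Reachable (Sum.inl p) (Sum.inl q) :=
      (ha1.symm.reachable.trans hrB).trans ha2.reachable
    have htri := aux_dist_tri ha1.reachable hrpq
    have htri2 := aux_dist_tri (ha1.reachable.trans hrpq) ha2.symm.reachable
    have hle1 : (BGraph X).dist (Sum.inr x) (Sum.inl p) ≤ 1 := by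
      simpa using SimpleGraph.dist_le (Walk.cons ha1 Walk.nil)
    have hle2 : (BGraph X).dist (Sum.inl q) (Sum.inr y) ≤ 1 := by
      simpa using SimpleGraph.dist_le (Walk.cons ha2.symm Walk.nil)
    have hdxy : (BGraph X).dist (Sum.inr x) (Sum.inr y)
        = 2 * (GammaGraph X).dist x y := aux_dist_inr hpos
    have hdpq : (BGraph X).dist (Sum.inl p) (Sum.inl q)
        = 2 * (DeltaGraph X).dist p q := aux_dist_inl
    have hgle : (DeltaGraph X).dist p q ≤ gdiam (DeltaGraph X) :=
      aux_le_gdiam _ (aux_reach_inl.mp hrpq)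
    omega
  -- case split on the value of gdiam (BGraph X)
  have hcase : gdiam (BGraph X) = 2 * m ∨ gdiam (BGraph X) = 2 * m + 1 := by omega
  rcases hcase with hB2m | hB2m1
  · left
    exact ⟨by rw [hB2m, hm], by omega⟩
  · right
    -- gdiam (BGraph X) = 2m+1 is achieved by a mixed pair
    obtain ⟨u, v, hr, hd⟩ := aux_gdiam_spec (BGraph X)
    have key : ∀ (p : ↥(rho X)) (x : ↥(Xstar X)),
        (BGraph X).Reachable (Sum.inl p) (Sum.inr x) →
        (BGraph X).dist (Sum.inl p) (Sum.inr x) = gdiam (BGraph X) → gdiam (DeltaGraph X) = m ∧ gdiam (GammaGraph X) = m := by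
      intro p x hrx hdx
      -- Delta part
      set q : ↥(rho X) := ⟨(x : ℕ).minFac, minfac_rho x⟩ with hq
      have hadj : (BGraph X).Adj (Sum.inr x) (Sum.inl q) := Nat.minFac_dvd _
      have hr1 : (BGraph X).Reachable (Sum.inl p) (Sum.inl q) :=
        hrx.trans hadj.reachable
      have htri := aux_dist_tri hr1 hadj.symm.reachable
      have hle1 : (BGraph X).dist (Sum.inl q) (Sum.inr x) ≤ 1 := by
        simpa using SimpleGraph.dist_le (Walk.cons hadj.symm Walk.nil)
      have hdq : (BGraph X).dist (Sum.inl p) (Sum.inl q)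
          = 2 * (DeltaGraph X).dist p q := aux_dist_inl
      have hdd : (DeltaGraph X).dist p q ≤ gdiam (DeltaGraph X) :=
        aux_le_gdiam _ (aux_reach_inl.mp hr1)
      -- Gamma part
      obtain ⟨yp, hypX, hypd⟩ := p.2.2
      have hyp : yp ∈ Xstar X := aux_mem_Xstar_of_prime_dvd p.2.1 hypd hypX
      have hadj2 : (BGraph X).Adj (Sum.inl p) (Sum.inr ⟨yp, hyp⟩) := hypd
      have hr2 : (BGraph X).Reachable (Sum.inr (⟨yp, hyp⟩ : ↥(Xstar X))) (Sum.inr x) :=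
        hadj2.symm.reachable.trans hrx
      have htri2 := aux_dist_tri hadj2.reachable hr2
      have hle2 : (BGraph X).dist (Sum.inl p) (Sum.inr ⟨yp, hyp⟩) ≤ 1 := by
        simpa using SimpleGraph.dist_le (Walk.cons hadj2 Walk.nil)
      have hdy : (BGraph X).dist (Sum.inr (⟨yp, hyp⟩ : ↥(Xstar X))) (Sum.inr x)
          = 2 * (GammaGraph X).dist ⟨yp, hyp⟩ x := aux_dist_inr hpos
      have hgg : (GammaGraph X).dist ⟨yp, hyp⟩ x ≤ gdiam (GammaGraph X) :=
        aux_le_gdiam _ ((aux_reach_inr hpos).mp hr2)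
      omega
    have hΔΓeq : gdiam (DeltaGraph X) = m ∧ gdiam (GammaGraph X) = m := by
      match u, v with
      | Sum.inl p, Sum.inl q =>
        exfalso
        rw [aux_dist_inl] at hd
        have hdd : (DeltaGraph X).dist p q ≤ gdiam (DeltaGraph X) :=
          aux_le_gdiam _ (aux_reach_inl.mp hr)
        have := hmΔ
        omega
      | Sum.inr x, Sum.inr y =>
        exfalso
        rw [aux_dist_inr hpos] at hd
        have hdd : (GammaGraph X).dist x y ≤ gdiam (GammaGraph X) :=
          aux_le_gdiam _ ((aux_reach_inr hpos).mp hr)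
        have := hmΓ
        omega
      | Sum.inl p, Sum.inr x => exact key p x hr hd
      | Sum.inr x, Sum.inl p =>
        exact key p x hr.symm (by rwa [SimpleGraph.dist_comm] at hd)
    obtain ⟨h1, h2⟩ := hΔΓeq
    exact ⟨by omega, by omega⟩
end

section
/- If Δ(X) contains a complete subgraph K4 on four vertices, then B(X) contains a subgraph isomorphic to one of: the complete bipartite graph K_{1,4}; the incidence graph Inc(K4) of the complete graph K4; the graph 𝒦; or the graph 𝒢. -/
open SimpleGraph

/-- The incidence graph of a graph `G`: the bipartite graph on `V ⊔ E(G)` in which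
a vertex `v` and an edge `e` are adjacent iff `v` is an endpoint of `e`. -/
def IncGraph {V : Type*} (G : SimpleGraph V) : SimpleGraph (V ⊕ ↥G.edgeSet) where
  Adj u w :=
    match u, w with
    | Sum.inl v, Sum.inr e => v ∈ (e : Sym2 V)
    | Sum.inr e, Sum.inl v => v ∈ (e : Sym2 V)
    | _, _ => False
  symm := by constructor; rintro (v | e) (v' | e') h <;> exact h
  loopless := by constructor; rintro (v | e) h <;> exact h

/-- `G` contains a subgraph isomorphic to `H`: an injective map from the vertices of `H`
to the vertices of `G` carrying edges of `H` to edges of `G`. -/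
def ContainsSub {V W : Type*} (G : SimpleGraph V) (H : SimpleGraph W) : Prop :=
  ∃ f : W → V, Function.Injective f ∧ ∀ u v, H.Adj u v → G.Adj (f u) (f v)

/-- The bipartite graph `𝒦` with parts `{a1,a2,a3,a4}` and `{b1,b2,b3}` and edges
`b1a1, b1a2, b1a3, b2a1, b2a2, b2a4, b3a3, b3a4`. -/
def graphK : SimpleGraph (Fin 4 ⊕ Fin 3) where
  Adj u v :=
    match u, v with
    | Sum.inl a, Sum.inr b =>
        ((b : ℕ), (a : ℕ)) ∈ [(0, 0), (0, 1), (0, 2), (1, 0), (1, 1), (1, 3), (2, 2), (2, 3)]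
    | Sum.inr b, Sum.inl a =>
        ((b : ℕ), (a : ℕ)) ∈ [(0, 0), (0, 1), (0, 2), (1, 0), (1, 1), (1, 3), (2, 2), (2, 3)]
    | _, _ => False
  symm := by constructor; rintro (a | b) (a' | b') h <;> exact h
  loopless := by constructor; rintro (a | b) h <;> exact h

/-- The bipartite graph `𝒢` with parts `{a1,a2,a3,a4}` and `{b1,b2,b3,b4}` and edges
`b1a1, b1a2, b1a3, b2a1, b2a4, b3a2, b3a4, b4a3, b4a4`. -/
def graphG : SimpleGraph (Fin 4 ⊕ Fin 4) where
  Adj u v :=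
    match u, v with
    | Sum.inl a, Sum.inr b =>
        ((b : ℕ), (a : ℕ)) ∈
          [(0, 0), (0, 1), (0, 2), (1, 0), (1, 3), (2, 1), (2, 3), (3, 2), (3, 3)]
    | Sum.inr b, Sum.inl a =>
        ((b : ℕ), (a : ℕ)) ∈
          [(0, 0), (0, 1), (0, 2), (1, 0), (1, 3), (2, 1), (2, 3), (3, 2), (3, 3)]
    | _, _ => False
  symm := by constructor; rintro (a | b) (a' | b') h <;> exact h
  loopless := by constructor; rintro (a | b) h <;> exact h

section AuxStmt13

lemma fin4_cover13 : ∀ a b c m t : Fin 4, a ≠ b → a ≠ c → b ≠ c → a ≠ m → b ≠ m → c ≠ m →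
    (t = a ∨ t = b ∨ t = c ∨ t = m) := by decide

lemma fin4_missing13 : ∀ a b c : Fin 4, a ≠ b → a ≠ c → b ≠ c →
    ∃ m, a ≠ m ∧ b ≠ m ∧ c ≠ m := by decide

lemma sym2_sep13 : ∀ e e' : Sym2 (Fin 4), ¬ e.IsDiag → ¬ e'.IsDiag → e ≠ e' →
    ∃ a b c : Fin 4, a ≠ b ∧ a ≠ c ∧ b ≠ c ∧ a ∈ e ∧ b ∈ e ∧ c ∈ e' := by decide

lemma caseK14' (X : Set ℕ) (q : Fin 4 → ↥(rho X)) (hq : Function.Injective q)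
    (x : ↥(Xstar X)) (hx : ∀ a, (q a : ℕ) ∣ (x : ℕ)) :
    ContainsSub (BGraph X) (completeBipartiteGraph (Fin 1) (Fin 4)) := by
  refine ⟨Sum.elim (fun _ => Sum.inr x) (fun a => Sum.inl (q a)), ?_, ?_⟩
  · rintro (t | s) (t' | s') h
    · exact congrArg Sum.inl (Subsingleton.elim t t')
    · simp at h
    · simp at h
    · simp only [Sum.elim_inr, Sum.inl.injEq] at h
      exact congrArg Sum.inr (hq h)
  · rintro (t | s) (t' | s') h
    · simp at h
    · exact hx s'
    · exact hx s
    · simp at h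

lemma caseK' (X : Set ℕ) (q : Fin 4 → ↥(rho X)) (hq : Function.Injective q)
    (a b c d : Fin 4) (hab : a ≠ b) (hac : a ≠ c) (had : a ≠ d)
    (hbc : b ≠ c) (hbd : b ≠ d) (hcd : c ≠ d)
    (y z w : ↥(Xstar X))
    (hya : (q a : ℕ) ∣ (y : ℕ)) (hyb : (q b : ℕ) ∣ (y : ℕ)) (hyc : (q c : ℕ) ∣ (y : ℕ))
    (hza : (q a : ℕ) ∣ (z : ℕ)) (hzb : (q b : ℕ) ∣ (z : ℕ)) (hzd : (q d : ℕ) ∣ (z : ℕ))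
    (hwc : (q c : ℕ) ∣ (w : ℕ)) (hwd : (q d : ℕ) ∣ (w : ℕ))
    (hyd : ¬ (q d : ℕ) ∣ (y : ℕ)) (hzc : ¬ (q c : ℕ) ∣ (z : ℕ)) :
    ContainsSub (BGraph X) graphK := by
  have hyz : y ≠ z := fun h => hyd (by rw [h]; exact hzd)
  have hyw : y ≠ w := fun h => hyd (by rw [h]; exact hwd)
  have hzw : z ≠ w := fun h => hzc (by rw [h]; exact hwc)
  refine ⟨Sum.elim (fun t => Sum.inl (q (![a, b, c, d] t))) (fun s => Sum.inr (![y, z, w] s)),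
    ?_, ?_⟩
  · rintro (t | s) (t' | s') h
    · simp only [Sum.elim_inl, Sum.inl.injEq] at h
      have h2 := hq h
      fin_cases t <;> fin_cases t' <;>
        first
          | rfl
          | exact absurd h2 hab | exact absurd h2 hac | exact absurd h2 had
          | exact absurd h2 hbc | exact absurd h2 hbd | exact absurd h2 hcd
          | exact absurd h2.symm hab | exact absurd h2.symm hac | exact absurd h2.symm had
          | exact absurd h2.symm hbc | exact absurd h2.symm hbd | exact absurd h2.symm hcd
    · simp at h
    · simp at h
    · simp only [Sum.elim_inr, Sum.inr.injEq] at h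
      fin_cases s <;> fin_cases s' <;>
        first
          | rfl
          | exact absurd h hyz | exact absurd h hyw | exact absurd h hzw
          | exact absurd h.symm hyz | exact absurd h.symm hyw | exact absurd h.symm hzw
  · rintro (t | s) (t' | s') h
    · simp [graphK] at h
    · fin_cases t <;> fin_cases s' <;>
        first
          | exact hya | exact hyb | exact hyc
          | exact hza | exact hzb | exact hzd
          | exact hwc | exact hwd
          | exact absurd h (by simp [graphK] <;> decide)
    · fin_cases s <;> fin_cases t' <;>
        first
          | exact hya | exact hyb | exact hyc
          | exact hza | exact hzb | exact hzd
          | exact hwc | exact hwd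
          | exact absurd h (by simp [graphK] <;> decide)
    · simp [graphK] at h

lemma caseG' (X : Set ℕ) (q : Fin 4 → ↥(rho X)) (hq : Function.Injective q)
    (a b c d : Fin 4) (hab : a ≠ b) (hac : a ≠ c) (had : a ≠ d)
    (hbc : b ≠ c) (hbd : b ≠ d) (hcd : c ≠ d)
    (y z1 z2 z3 : ↥(Xstar X))
    (hya : (q a : ℕ) ∣ (y : ℕ)) (hyb : (q b : ℕ) ∣ (y : ℕ)) (hyc : (q c : ℕ) ∣ (y : ℕ))
    (hz1a : (q a : ℕ) ∣ (z1 : ℕ)) (hz1d : (q d : ℕ) ∣ (z1 : ℕ))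
    (hz2b : (q b : ℕ) ∣ (z2 : ℕ)) (hz2d : (q d : ℕ) ∣ (z2 : ℕ))
    (hz3c : (q c : ℕ) ∣ (z3 : ℕ)) (hz3d : (q d : ℕ) ∣ (z3 : ℕ))
    (hyd : ¬ (q d : ℕ) ∣ (y : ℕ))
    (h1 : ¬ (q a : ℕ) ∣ (z2 : ℕ)) (h2 : ¬ (q a : ℕ) ∣ (z3 : ℕ))
    (h3 : ¬ (q b : ℕ) ∣ (z3 : ℕ)) :
    ContainsSub (BGraph X) graphG := by
  have e1 : y ≠ z1 := fun h => hyd (by rw [h]; exact hz1d)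
  have e2 : y ≠ z2 := fun h => hyd (by rw [h]; exact hz2d)
  have e3 : y ≠ z3 := fun h => hyd (by rw [h]; exact hz3d)
  have e4 : z1 ≠ z2 := fun h => h1 (by rw [← h]; exact hz1a)
  have e5 : z1 ≠ z3 := fun h => h2 (by rw [← h]; exact hz1a)
  have e6 : z2 ≠ z3 := fun h => h3 (by rw [← h]; exact hz2b)
  refine ⟨Sum.elim (fun t => Sum.inl (q (![a, b, c, d] t)))
    (fun s => Sum.inr (![y, z1, z2, z3] s)), ?_, ?_⟩
  · rintro (t | s) (t' | s') h
    · simp only [Sum.elim_inl, Sum.inl.injEq] at h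
      have h2 := hq h
      fin_cases t <;> fin_cases t' <;>
        first
          | rfl
          | exact absurd h2 hab | exact absurd h2 hac | exact absurd h2 had
          | exact absurd h2 hbc | exact absurd h2 hbd | exact absurd h2 hcd
          | exact absurd h2.symm hab | exact absurd h2.symm hac | exact absurd h2.symm had
          | exact absurd h2.symm hbc | exact absurd h2.symm hbd | exact absurd h2.symm hcd
    · simp at h
    · simp at h
    · simp only [Sum.elim_inr, Sum.inr.injEq] at h
      fin_cases s <;> fin_cases s' <;>
        first
          | rfl
          | exact absurd h e1 | exact absurd h e2 | exact absurd h e3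
          | exact absurd h e4 | exact absurd h e5 | exact absurd h e6
          | exact absurd h.symm e1 | exact absurd h.symm e2 | exact absurd h.symm e3
          | exact absurd h.symm e4 | exact absurd h.symm e5 | exact absurd h.symm e6
  · rintro (t | s) (t' | s') h
    · simp [graphG] at h
    · fin_cases t <;> fin_cases s' <;>
        first
          | exact hya | exact hyb | exact hyc
          | exact hz1a | exact hz1d | exact hz2b | exact hz2d
          | exact hz3c | exact hz3d
          | exact absurd h (by simp [graphG] <;> decide)
    · fin_cases s <;> fin_cases t' <;>
        first
          | exact hya | exact hyb | exact hyc
          | exact hz1a | exact hz1d | exact hz2b | exact hz2d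
          | exact hz3c | exact hz3d
          | exact absurd h (by simp [graphG] <;> decide)
    · simp [graphG] at h

lemma caseInc' (X : Set ℕ) (q : Fin 4 → ↥(rho X)) (hq : Function.Injective q)
    (hcov : ∀ a b : Fin 4, a ≠ b →
      ∃ x : ↥(Xstar X), (q a : ℕ) ∣ (x : ℕ) ∧ (q b : ℕ) ∣ (x : ℕ))
    (hB : ¬ ∃ x : ↥(Xstar X), ∃ a b c : Fin 4, a ≠ b ∧ a ≠ c ∧ b ≠ c ∧
      (q a : ℕ) ∣ (x : ℕ) ∧ (q b : ℕ) ∣ (x : ℕ) ∧ (q c : ℕ) ∣ (x : ℕ)) :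
    ContainsSub (BGraph X) (IncGraph (⊤ : SimpleGraph (Fin 4))) := by
  have hw0 : ∀ e : Sym2 (Fin 4), e ∈ (⊤ : SimpleGraph (Fin 4)).edgeSet →
      ∃ x : ↥(Xstar X), ∀ a ∈ e, (q a : ℕ) ∣ (x : ℕ) := by
    intro e
    induction e using Sym2.ind with
    | _ u v =>
      intro he
      have huv : u ≠ v := (SimpleGraph.mem_edgeSet _).mp he
      obtain ⟨x, h1, h2⟩ := hcov u v huv
      refine ⟨x, ?_⟩
      intro t ht
      rcases Sym2.mem_iff.mp ht with rfl | rfl <;> assumption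
  have hw : ∀ e : ↥((⊤ : SimpleGraph (Fin 4)).edgeSet),
      ∃ x : ↥(Xstar X), ∀ a ∈ (e : Sym2 (Fin 4)), (q a : ℕ) ∣ (x : ℕ) :=
    fun e => hw0 e.1 e.2
  choose w hwspec using hw
  refine ⟨Sum.elim (fun v => Sum.inl (q v)) (fun e => Sum.inr (w e)), ?_, ?_⟩
  · rintro (t | e) (t' | e') h
    · simp only [Sum.elim_inl, Sum.inl.injEq] at h
      exact congrArg Sum.inl (hq h)
    · simp at h
    · simp at h
    · simp only [Sum.elim_inr, Sum.inr.injEq] at h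
      refine congrArg Sum.inr ?_
      by_contra hne
      obtain ⟨a2, b2, c2, hab, hac, hbc, ha, hb, hc⟩ :=
        sym2_sep13 e.1 e'.1 ((⊤ : SimpleGraph (Fin 4)).not_isDiag_of_mem_edgeSet e.2)
          ((⊤ : SimpleGraph (Fin 4)).not_isDiag_of_mem_edgeSet e'.2)
          (fun hee => hne (Subtype.ext hee))
      exact hB ⟨w e, a2, b2, c2, hab, hac, hbc, hwspec e a2 ha, hwspec e b2 hb,
        by rw [h]; exact hwspec e' c2 hc⟩
  · rintro (t | e) (t' | e') h
    · simp [IncGraph] at h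
    · exact hwspec e' t h
    · exact hwspec e t' h
    · simp [IncGraph] at h

lemma main3' (X : Set ℕ) (q : Fin 4 → ↥(rho X)) (hq : Function.Injective q)
    (hcov : ∀ a b : Fin 4, a ≠ b →
      ∃ x : ↥(Xstar X), (q a : ℕ) ∣ (x : ℕ) ∧ (q b : ℕ) ∣ (x : ℕ))
    (hA : ¬ ∃ x : ↥(Xstar X), ∀ a, (q a : ℕ) ∣ (x : ℕ))
    (a b c d : Fin 4) (hab : a ≠ b) (hac : a ≠ c) (hbc : b ≠ c)
    (had : a ≠ d) (hbd : b ≠ d) (hcd : c ≠ d)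
    (y : ↥(Xstar X)) (hya : (q a : ℕ) ∣ (y : ℕ)) (hyb : (q b : ℕ) ∣ (y : ℕ))
    (hyc : (q c : ℕ) ∣ (y : ℕ)) :
    ContainsSub (BGraph X) graphK ∨ ContainsSub (BGraph X) graphG := by
  have hall : ∀ x : ↥(Xstar X), (q a : ℕ) ∣ (x : ℕ) → (q b : ℕ) ∣ (x : ℕ) →
      (q c : ℕ) ∣ (x : ℕ) → (q d : ℕ) ∣ (x : ℕ) → False := by
    intro x h1 h2 h3 h4
    refine hA ⟨x, fun t => ?_⟩
    rcases fin4_cover13 a b c d t hab hac hbc had hbd hcd with rfl | rfl | rfl | rfl <;>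
      assumption
  obtain ⟨z1, hz1a, hz1d⟩ := hcov a d had
  obtain ⟨z2, hz2b, hz2d⟩ := hcov b d hbd
  obtain ⟨z3, hz3c, hz3d⟩ := hcov c d hcd
  have hyd : ¬ (q d : ℕ) ∣ (y : ℕ) := fun h => hall y hya hyb hyc h
  by_cases h1 : (q b : ℕ) ∣ (z1 : ℕ)
  · exact Or.inl (caseK' X q hq a b c d hab hac had hbc hbd hcd y z1 z3
      hya hyb hyc hz1a h1 hz1d hz3c hz3d hyd (fun h => hall z1 hz1a h1 h hz1d))
  by_cases h2 : (q c : ℕ) ∣ (z1 : ℕ)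
  · exact Or.inl (caseK' X q hq a c b d hac hab had (Ne.symm hbc) hcd hbd y z1 z2
      hya hyc hyb hz1a h2 hz1d hz2b hz2d hyd h1)
  by_cases h3 : (q a : ℕ) ∣ (z2 : ℕ)
  · exact Or.inl (caseK' X q hq b a c d (Ne.symm hab) hbc hbd hac had hcd y z2 z3
      hyb hya hyc hz2b h3 hz2d hz3c hz3d hyd (fun h => hall z2 h3 hz2b h hz2d))
  by_cases h4 : (q c : ℕ) ∣ (z2 : ℕ)
  · exact Or.inl (caseK' X q hq b c a d hbc (Ne.symm hab) hbd (Ne.symm hac) hcd had y z2 z1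
      hyb hyc hya hz2b h4 hz2d hz1a hz1d hyd h3)
  by_cases h5 : (q a : ℕ) ∣ (z3 : ℕ)
  · exact Or.inl (caseK' X q hq c a b d (Ne.symm hac) (Ne.symm hbc) hcd hab had hbd y z3 z2
      hyc hya hyb hz3c h5 hz3d hz2b hz2d hyd (fun h => hall z3 h5 h hz3c hz3d))
  by_cases h6 : (q b : ℕ) ∣ (z3 : ℕ)
  · exact Or.inl (caseK' X q hq c b a d (Ne.symm hbc) (Ne.symm hac) hcd (Ne.symm hab) hbd had
      y z3 z1 hyc hyb hya hz3c h6 hz3d hz1a hz1d hyd h5)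
  · exact Or.inr (caseG' X q hq a b c d hab hac had hbc hbd hcd y z1 z2 z3
      hya hyb hyc hz1a hz1d hz2b hz2d hz3c hz3d hyd h3 h5 h6)

end AuxStmt13

theorem stmt_13 (X : Set ℕ) (hne : X.Nonempty) (hpos : ∀ x ∈ X, 0 < x)
    (hX1 : X ≠ {1})
    (h : ContainsSub (DeltaGraph X) (⊤ : SimpleGraph (Fin 4))) :
    ContainsSub (BGraph X) (completeBipartiteGraph (Fin 1) (Fin 4)) ∨
    ContainsSub (BGraph X) (IncGraph (⊤ : SimpleGraph (Fin 4))) ∨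
    ContainsSub (BGraph X) graphK ∨
    ContainsSub (BGraph X) graphG := by
  obtain ⟨q, hq, hadj⟩ := h
  have hcov : ∀ a b : Fin 4, a ≠ b →
      ∃ x : ↥(Xstar X), (q a : ℕ) ∣ (x : ℕ) ∧ (q b : ℕ) ∣ (x : ℕ) := by
    intro a b hne
    obtain ⟨-, x, hxX, hdvd⟩ := hadj a b hne
    have hp : Nat.Prime (q a : ℕ) := (q a).2.1
    have hx1 : x ≠ 1 := by
      rintro rfl
      have h1 : (q a : ℕ) ∣ 1 := dvd_trans (dvd_mul_right _ _) hdvd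
      have h2 := Nat.le_of_dvd one_pos h1
      have h3 := hp.two_le
      omega
    exact ⟨⟨x, hxX, hx1⟩, dvd_trans (dvd_mul_right _ _) hdvd,
      dvd_trans (dvd_mul_left _ _) hdvd⟩
  by_cases hA : ∃ x : ↥(Xstar X), ∀ a, (q a : ℕ) ∣ (x : ℕ)
  · obtain ⟨x, hx⟩ := hA
    exact Or.inl (caseK14' X q hq x hx)
  by_cases hB : ∃ x : ↥(Xstar X), ∃ a b c : Fin 4, a ≠ b ∧ a ≠ c ∧ b ≠ c ∧
      (q a : ℕ) ∣ (x : ℕ) ∧ (q b : ℕ) ∣ (x : ℕ) ∧ (q c : ℕ) ∣ (x : ℕ)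
  · obtain ⟨x, a, b, c, hab, hac, hbc, d1, d2, d3⟩ := hB
    obtain ⟨m, ham, hbm, hcm⟩ := fin4_missing13 a b c hab hac hbc
    rcases main3' X q hq hcov hA a b c m hab hac hbc ham hbm hcm x d1 d2 d3 with hK | hG
    · exact Or.inr (Or.inr (Or.inl hK))
    · exact Or.inr (Or.inr (Or.inr hG))
  · exact Or.inr (Or.inl (caseInc' X q hq hcov hB))
end

section
/- If Γ(X) contains a complete subgraph K4 on four vertices, then B(X) contains a subgraph isomorphic to one of: the complete bipartite graph K_{1,4}; the incidence graph Inc(K4) of the complete graph K4; the graph 𝒦; or the graph 𝒢. -/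
open SimpleGraph

section Aux

lemma aux_containsSub {X : Set ℕ} {α β : Type*} (H : SimpleGraph (α ⊕ β))
    (hH : ∀ a a', ¬ H.Adj (Sum.inl a) (Sum.inl a'))
    (hH' : ∀ b b', ¬ H.Adj (Sum.inr b) (Sum.inr b'))
    (E : α → ↥(Xstar X)) (P : β → ↥(rho X))
    (hE : Function.Injective E) (hP : Function.Injective P)
    (hAdj : ∀ a b, H.Adj (Sum.inl a) (Sum.inr b) → (P b : ℕ) ∣ (E a : ℕ)) :
    ContainsSub (BGraph X) H := by
  refine ⟨Sum.elim (fun a => Sum.inr (E a)) (fun b => Sum.inl (P b)), ?_, ?_⟩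
  · rintro (a | b) (a' | b') hfe <;> simp_all
    exacts [hE hfe, hP hfe]
  · rintro (a | b) (a' | b') hadj
    · exact absurd hadj (hH a a')
    · exact hAdj a b' hadj
    · exact hAdj a' b (H.adj_symm hadj)
    · exact absurd hadj (hH' b b')

lemma aux_fourth (i j k : Fin 4) (hij : i ≠ j) (hik : i ≠ k) (hjk : j ≠ k) :
    ∃ l : Fin 4, l ≠ i ∧ l ≠ j ∧ l ≠ k := by
  revert hij hik hjk; revert i j k; decide

lemma aux_all4 (i j k l : Fin 4) (hij : i ≠ j) (hik : i ≠ k) (hjk : j ≠ k)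
    (hli : l ≠ i) (hlj : l ≠ j) (hlk : l ≠ k) (t : Fin 4) :
    t = i ∨ t = j ∨ t = k ∨ t = l := by
  revert hij hik hjk hli hlj hlk; revert i j k l t; decide

set_option maxRecDepth 4000 in
set_option synthInstance.maxSize 400 in
lemma aux_three_distinct (i j k l : Fin 4) (hij : i ≠ j) (hkl : k ≠ l)
    (hne : ¬((i = k ∧ j = l) ∨ (i = l ∧ j = k))) :
    ∃ a b c : Fin 4, a ≠ b ∧ a ≠ c ∧ b ≠ c ∧
      (a = i ∨ a = j ∨ a = k ∨ a = l) ∧ (b = i ∨ b = j ∨ b = k ∨ b = l) ∧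
      (c = i ∨ c = j ∨ c = k ∨ c = l) := by
  revert hij hkl hne; revert i j k l; decide

lemma aux_inj3 {γ : Type*} (P : Fin 3 → γ) (h01 : P 0 ≠ P 1) (h02 : P 0 ≠ P 2)
    (h12 : P 1 ≠ P 2) : Function.Injective P := by
  intro s t
  fin_cases s <;> fin_cases t <;> intro hst <;>
    first
      | rfl
      | exact absurd hst h01 | exact absurd hst h02 | exact absurd hst h12
      | exact absurd hst.symm h01 | exact absurd hst.symm h02 | exact absurd hst.symm h12

lemma aux_inj4 {γ : Type*} (P : Fin 4 → γ) (h01 : P 0 ≠ P 1) (h02 : P 0 ≠ P 2)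
    (h03 : P 0 ≠ P 3) (h12 : P 1 ≠ P 2) (h13 : P 1 ≠ P 3) (h23 : P 2 ≠ P 3) :
    Function.Injective P := by
  intro s t
  fin_cases s <;> fin_cases t <;> intro hst <;>
    first
      | rfl
      | exact absurd hst h01 | exact absurd hst h02 | exact absurd hst h03
      | exact absurd hst h12 | exact absurd hst h13 | exact absurd hst h23
      | exact absurd hst.symm h01 | exact absurd hst.symm h02 | exact absurd hst.symm h03
      | exact absurd hst.symm h12 | exact absurd hst.symm h13 | exact absurd hst.symm h23

lemma aux_inj4map {γ δ : Type*} {f : γ → δ} (hf : Function.Injective f)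
    (a b c d : γ) (h1 : a ≠ b) (h2 : a ≠ c) (h3 : a ≠ d) (h4 : b ≠ c) (h5 : b ≠ d)
    (h6 : c ≠ d) : Function.Injective (fun t => f (![a, b, c, d] t)) := by
  apply aux_inj4 <;> intro hst <;>
    first
      | exact absurd (hf hst) h1 | exact absurd (hf hst) h2 | exact absurd (hf hst) h3
      | exact absurd (hf hst) h4 | exact absurd (hf hst) h5 | exact absurd (hf hst) h6

end Aux

theorem stmt_14 (X : Set ℕ) (hne : X.Nonempty) (hpos : ∀ x ∈ X, 0 < x)
    (hX1 : X ≠ {1})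
    (h : ContainsSub (GammaGraph X) (⊤ : SimpleGraph (Fin 4))) :
    ContainsSub (BGraph X) (completeBipartiteGraph (Fin 1) (Fin 4)) ∨
    ContainsSub (BGraph X) (IncGraph (⊤ : SimpleGraph (Fin 4))) ∨
    ContainsSub (BGraph X) graphK ∨
    ContainsSub (BGraph X) graphG := by
  classical
  obtain ⟨f, hfinj, hfadj⟩ := h
  have hgcd : ∀ i j : Fin 4, i ≠ j → 1 < Nat.gcd ((f i : ℕ)) ((f j : ℕ)) := by
    intro i j hij
    exact (hfadj i j ((SimpleGraph.top_adj i j).2 hij)).2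
  set q : Fin 4 → Fin 4 → ℕ := fun i j => (Nat.gcd ((f i : ℕ)) ((f j : ℕ))).minFac with hqdef
  have hq : ∀ i j : Fin 4, i ≠ j →
      (q i j).Prime ∧ q i j ∣ (f i : ℕ) ∧ q i j ∣ (f j : ℕ) := by
    intro i j hij
    have h1 := hgcd i j hij
    have hp : (q i j).Prime := Nat.minFac_prime (by omega)
    have hd : q i j ∣ Nat.gcd ((f i : ℕ)) ((f j : ℕ)) := Nat.minFac_dvd _
    exact ⟨hp, hd.trans (Nat.gcd_dvd_left _ _), hd.trans (Nat.gcd_dvd_right _ _)⟩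
  have hqsym : ∀ i j : Fin 4, q i j = q j i := by
    intro i j; simp only [hqdef, Nat.gcd_comm]
  have hrho : ∀ p : ℕ, p.Prime → ∀ i : Fin 4, p ∣ (f i : ℕ) → p ∈ rho X := by
    intro p hp i hd
    exact ⟨hp, (f i : ℕ), (f i).2.1, hd⟩
  by_cases hc4 : ∃ p : ℕ, p.Prime ∧ ∀ t : Fin 4, p ∣ (f t : ℕ)
  · -- K_{1,4}
    left
    obtain ⟨p, hp, hpt⟩ := hc4
    refine ⟨Sum.elim (fun _ => Sum.inl ⟨p, hrho p hp 0 (hpt 0)⟩) (fun t => Sum.inr (f t)),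
      ?_, ?_⟩
    · rintro (a | b) (a' | b') hfe <;> simp_all
      · exact Subsingleton.elim a a'
      · exact hfinj hfe
    · rintro (a | b) (a' | b') hadj
      · simp at hadj
      · exact hpt b'
      · exact hpt b
      · simp at hadj
  by_cases hc3 : ∃ p : ℕ, p.Prime ∧ ∃ i j k : Fin 4, i ≠ j ∧ i ≠ k ∧ j ≠ k ∧
      p ∣ (f i : ℕ) ∧ p ∣ (f j : ℕ) ∧ p ∣ (f k : ℕ)
  · -- graphK or graphG
    obtain ⟨p, hp, i, j, k, hij, hik, hjk, hpi, hpj, hpk⟩ := hc3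
    obtain ⟨l, hli, hlj, hlk⟩ := aux_fourth i j k hij hik hjk
    have hpl : ¬ p ∣ (f l : ℕ) := by
      intro hd
      refine hc4 ⟨p, hp, fun t => ?_⟩
      rcases aux_all4 i j k l hij hik hjk hli hlj hlk t with rfl | rfl | rfl | rfl <;>
        assumption
    have h1 := hq i l (Ne.symm hli)
    have h2 := hq j l (Ne.symm hlj)
    have h3 := hq k l (Ne.symm hlk)
    have hp1 : p ≠ q i l := fun he => hpl (he ▸ h1.2.2)
    have hp2 : p ≠ q j l := fun he => hpl (he ▸ h2.2.2)
    have hp3 : p ≠ q k l := fun he => hpl (he ▸ h3.2.2)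
    have hall4 : ∀ w : ℕ, w.Prime → w ∣ (f i : ℕ) → w ∣ (f j : ℕ) → w ∣ (f k : ℕ) →
        w ∣ (f l : ℕ) → False := by
      intro w hw hwi hwj hwk hwl
      refine hc4 ⟨w, hw, fun t => ?_⟩
      rcases aux_all4 i j k l hij hik hjk hli hlj hlk t with rfl | rfl | rfl | rfl <;>
        assumption
    by_cases h12 : q i l = q j l
    · -- graphK, elements (i,j,k,l), primes (p, q i l, q k l)
      have hd2 : q i l ∣ (f j : ℕ) := h12 ▸ h2.2.1
      have h13 : q i l ≠ q k l := fun he =>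
        hall4 (q i l) h1.1 h1.2.1 hd2 (he ▸ h3.2.1) h1.2.2
      right; right; left
      refine aux_containsSub graphK (fun _ _ hh => hh) (fun _ _ hh => hh)
        (fun t => f (![i, j, k, l] t))
        (![⟨p, hrho p hp i hpi⟩, ⟨q i l, hrho _ h1.1 i h1.2.1⟩, ⟨q k l, hrho _ h3.1 k h3.2.1⟩])
        (aux_inj4map hfinj i j k l hij hik (Ne.symm hli) hjk (Ne.symm hlj) (Ne.symm hlk))
        (aux_inj3 _ (fun he => hp1 (Subtype.ext_iff.1 he))
          (fun he => hp3 (Subtype.ext_iff.1 he)) (fun he => h13 (Subtype.ext_iff.1 he))) ?_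
      intro a b hadj
      have hadj' : ((b : ℕ), (a : ℕ)) ∈
          [((0:ℕ), (0:ℕ)), (0, 1), (0, 2), (1, 0), (1, 1), (1, 3), (2, 2), (2, 3)] := hadj
      simp only [List.mem_cons, List.not_mem_nil, or_false, Prod.mk.injEq] at hadj'
      rcases hadj' with ⟨hb, ha⟩ | ⟨hb, ha⟩ | ⟨hb, ha⟩ | ⟨hb, ha⟩ | ⟨hb, ha⟩ | ⟨hb, ha⟩ | ⟨hb, ha⟩ | ⟨hb, ha⟩
      · obtain rfl : b = (0 : Fin 3) := Fin.ext hb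
        obtain rfl : a = (0 : Fin 4) := Fin.ext ha
        exact hpi
      · obtain rfl : b = (0 : Fin 3) := Fin.ext hb
        obtain rfl : a = (1 : Fin 4) := Fin.ext ha
        exact hpj
      · obtain rfl : b = (0 : Fin 3) := Fin.ext hb
        obtain rfl : a = (2 : Fin 4) := Fin.ext ha
        exact hpk
      · obtain rfl : b = (1 : Fin 3) := Fin.ext hb
        obtain rfl : a = (0 : Fin 4) := Fin.ext ha
        exact h1.2.1
      · obtain rfl : b = (1 : Fin 3) := Fin.ext hb
        obtain rfl : a = (1 : Fin 4) := Fin.ext ha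
        exact hd2
      · obtain rfl : b = (1 : Fin 3) := Fin.ext hb
        obtain rfl : a = (3 : Fin 4) := Fin.ext ha
        exact h1.2.2
      · obtain rfl : b = (2 : Fin 3) := Fin.ext hb
        obtain rfl : a = (2 : Fin 4) := Fin.ext ha
        exact h3.2.1
      · obtain rfl : b = (2 : Fin 3) := Fin.ext hb
        obtain rfl : a = (3 : Fin 4) := Fin.ext ha
        exact h3.2.2
    by_cases h13 : q i l = q k l
    · -- graphK, elements (i,k,j,l), primes (p, q i l, q j l)
      have hd3 : q i l ∣ (f k : ℕ) := h13 ▸ h3.2.1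
      right; right; left
      refine aux_containsSub graphK (fun _ _ hh => hh) (fun _ _ hh => hh)
        (fun t => f (![i, k, j, l] t))
        (![⟨p, hrho p hp i hpi⟩, ⟨q i l, hrho _ h1.1 i h1.2.1⟩, ⟨q j l, hrho _ h2.1 j h2.2.1⟩])
        (aux_inj4map hfinj i k j l hik hij (Ne.symm hli) (Ne.symm hjk) (Ne.symm hlk)
          (Ne.symm hlj))
        (aux_inj3 _ (fun he => hp1 (Subtype.ext_iff.1 he))
          (fun he => hp2 (Subtype.ext_iff.1 he))
          (fun he => h12 (Subtype.ext_iff.1 he))) ?_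
      intro a b hadj
      have hadj' : ((b : ℕ), (a : ℕ)) ∈
          [((0:ℕ), (0:ℕ)), (0, 1), (0, 2), (1, 0), (1, 1), (1, 3), (2, 2), (2, 3)] := hadj
      simp only [List.mem_cons, List.not_mem_nil, or_false, Prod.mk.injEq] at hadj'
      rcases hadj' with ⟨hb, ha⟩ | ⟨hb, ha⟩ | ⟨hb, ha⟩ | ⟨hb, ha⟩ | ⟨hb, ha⟩ | ⟨hb, ha⟩ | ⟨hb, ha⟩ | ⟨hb, ha⟩
      · obtain rfl : b = (0 : Fin 3) := Fin.ext hb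
        obtain rfl : a = (0 : Fin 4) := Fin.ext ha
        exact hpi
      · obtain rfl : b = (0 : Fin 3) := Fin.ext hb
        obtain rfl : a = (1 : Fin 4) := Fin.ext ha
        exact hpk
      · obtain rfl : b = (0 : Fin 3) := Fin.ext hb
        obtain rfl : a = (2 : Fin 4) := Fin.ext ha
        exact hpj
      · obtain rfl : b = (1 : Fin 3) := Fin.ext hb
        obtain rfl : a = (0 : Fin 4) := Fin.ext ha
        exact h1.2.1
      · obtain rfl : b = (1 : Fin 3) := Fin.ext hb
        obtain rfl : a = (1 : Fin 4) := Fin.ext ha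
        exact hd3
      · obtain rfl : b = (1 : Fin 3) := Fin.ext hb
        obtain rfl : a = (3 : Fin 4) := Fin.ext ha
        exact h1.2.2
      · obtain rfl : b = (2 : Fin 3) := Fin.ext hb
        obtain rfl : a = (2 : Fin 4) := Fin.ext ha
        exact h2.2.1
      · obtain rfl : b = (2 : Fin 3) := Fin.ext hb
        obtain rfl : a = (3 : Fin 4) := Fin.ext ha
        exact h2.2.2
    by_cases h23 : q j l = q k l
    · -- graphK, elements (j,k,i,l), primes (p, q j l, q i l)
      have hd3 : q j l ∣ (f k : ℕ) := h23 ▸ h3.2.1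
      right; right; left
      refine aux_containsSub graphK (fun _ _ hh => hh) (fun _ _ hh => hh)
        (fun t => f (![j, k, i, l] t))
        (![⟨p, hrho p hp i hpi⟩, ⟨q j l, hrho _ h2.1 j h2.2.1⟩, ⟨q i l, hrho _ h1.1 i h1.2.1⟩])
        (aux_inj4map hfinj j k i l hjk (Ne.symm hij) (Ne.symm hlj) (Ne.symm hik)
          (Ne.symm hlk) (Ne.symm hli))
        (aux_inj3 _ (fun he => hp2 (Subtype.ext_iff.1 he))
          (fun he => hp1 (Subtype.ext_iff.1 he))
          (fun he => h12 (Subtype.ext_iff.1 he).symm)) ?_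
      intro a b hadj
      have hadj' : ((b : ℕ), (a : ℕ)) ∈
          [((0:ℕ), (0:ℕ)), (0, 1), (0, 2), (1, 0), (1, 1), (1, 3), (2, 2), (2, 3)] := hadj
      simp only [List.mem_cons, List.not_mem_nil, or_false, Prod.mk.injEq] at hadj'
      rcases hadj' with ⟨hb, ha⟩ | ⟨hb, ha⟩ | ⟨hb, ha⟩ | ⟨hb, ha⟩ | ⟨hb, ha⟩ | ⟨hb, ha⟩ | ⟨hb, ha⟩ | ⟨hb, ha⟩
      · obtain rfl : b = (0 : Fin 3) := Fin.ext hb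
        obtain rfl : a = (0 : Fin 4) := Fin.ext ha
        exact hpj
      · obtain rfl : b = (0 : Fin 3) := Fin.ext hb
        obtain rfl : a = (1 : Fin 4) := Fin.ext ha
        exact hpk
      · obtain rfl : b = (0 : Fin 3) := Fin.ext hb
        obtain rfl : a = (2 : Fin 4) := Fin.ext ha
        exact hpi
      · obtain rfl : b = (1 : Fin 3) := Fin.ext hb
        obtain rfl : a = (0 : Fin 4) := Fin.ext ha
        exact h2.2.1
      · obtain rfl : b = (1 : Fin 3) := Fin.ext hb
        obtain rfl : a = (1 : Fin 4) := Fin.ext ha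
        exact hd3
      · obtain rfl : b = (1 : Fin 3) := Fin.ext hb
        obtain rfl : a = (3 : Fin 4) := Fin.ext ha
        exact h2.2.2
      · obtain rfl : b = (2 : Fin 3) := Fin.ext hb
        obtain rfl : a = (2 : Fin 4) := Fin.ext ha
        exact h1.2.1
      · obtain rfl : b = (2 : Fin 3) := Fin.ext hb
        obtain rfl : a = (3 : Fin 4) := Fin.ext ha
        exact h1.2.2
    · -- graphG, elements (i,j,k,l), primes (p, q i l, q j l, q k l)
      right; right; right
      refine aux_containsSub graphG (fun _ _ hh => hh) (fun _ _ hh => hh)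
        (fun t => f (![i, j, k, l] t))
        (![⟨p, hrho p hp i hpi⟩, ⟨q i l, hrho _ h1.1 i h1.2.1⟩,
           ⟨q j l, hrho _ h2.1 j h2.2.1⟩, ⟨q k l, hrho _ h3.1 k h3.2.1⟩])
        (aux_inj4map hfinj i j k l hij hik (Ne.symm hli) hjk (Ne.symm hlj) (Ne.symm hlk))
        (aux_inj4 _ (fun he => hp1 (Subtype.ext_iff.1 he))
          (fun he => hp2 (Subtype.ext_iff.1 he))
          (fun he => hp3 (Subtype.ext_iff.1 he))
          (fun he => h12 (Subtype.ext_iff.1 he))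
          (fun he => h13 (Subtype.ext_iff.1 he))
          (fun he => h23 (Subtype.ext_iff.1 he))) ?_
      intro a b hadj
      have hadj' : ((b : ℕ), (a : ℕ)) ∈
          [((0:ℕ), (0:ℕ)), (0, 1), (0, 2), (1, 0), (1, 3), (2, 1), (2, 3), (3, 2), (3, 3)] :=
        hadj
      simp only [List.mem_cons, List.not_mem_nil, or_false, Prod.mk.injEq] at hadj'
      rcases hadj' with ⟨hb, ha⟩ | ⟨hb, ha⟩ | ⟨hb, ha⟩ | ⟨hb, ha⟩ | ⟨hb, ha⟩ | ⟨hb, ha⟩ | ⟨hb, ha⟩ | ⟨hb, ha⟩ | ⟨hb, ha⟩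
      · obtain rfl : b = (0 : Fin 4) := Fin.ext hb
        obtain rfl : a = (0 : Fin 4) := Fin.ext ha
        exact hpi
      · obtain rfl : b = (0 : Fin 4) := Fin.ext hb
        obtain rfl : a = (1 : Fin 4) := Fin.ext ha
        exact hpj
      · obtain rfl : b = (0 : Fin 4) := Fin.ext hb
        obtain rfl : a = (2 : Fin 4) := Fin.ext ha
        exact hpk
      · obtain rfl : b = (1 : Fin 4) := Fin.ext hb
        obtain rfl : a = (0 : Fin 4) := Fin.ext ha
        exact h1.2.1
      · obtain rfl : b = (1 : Fin 4) := Fin.ext hb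
        obtain rfl : a = (3 : Fin 4) := Fin.ext ha
        exact h1.2.2
      · obtain rfl : b = (2 : Fin 4) := Fin.ext hb
        obtain rfl : a = (1 : Fin 4) := Fin.ext ha
        exact h2.2.1
      · obtain rfl : b = (2 : Fin 4) := Fin.ext hb
        obtain rfl : a = (3 : Fin 4) := Fin.ext ha
        exact h2.2.2
      · obtain rfl : b = (3 : Fin 4) := Fin.ext hb
        obtain rfl : a = (2 : Fin 4) := Fin.ext ha
        exact h3.2.1
      · obtain rfl : b = (3 : Fin 4) := Fin.ext hb
        obtain rfl : a = (3 : Fin 4) := Fin.ext ha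
        exact h3.2.2
  · -- Inc(K4)
    right; left
    set Q : Sym2 (Fin 4) → ℕ := Sym2.lift ⟨q, hqsym⟩ with hQdef
    have hQ : ∀ (e : Sym2 (Fin 4)), e ∈ (⊤ : SimpleGraph (Fin 4)).edgeSet →
        (Q e).Prime ∧ ∀ v ∈ e, Q e ∣ (f v : ℕ) := by
      intro e
      induction e using Sym2.ind with
      | _ i j =>
        intro he
        have hij : i ≠ j := by simpa using he
        have hQe : Q s(i, j) = q i j := Sym2.lift_mk _ i j
        refine ⟨hQe ▸ (hq i j hij).1, ?_⟩
        intro v hv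
        rcases Sym2.mem_iff.1 hv with rfl | rfl
        · exact hQe ▸ (hq v j hij).2.1
        · exact hQe ▸ (hq i v hij).2.2
    have hkey : ∀ e e' : Sym2 (Fin 4), e ∈ (⊤ : SimpleGraph (Fin 4)).edgeSet →
        e' ∈ (⊤ : SimpleGraph (Fin 4)).edgeSet → Q e = Q e' → e = e' := by
      intro e e'
      induction e using Sym2.ind with
      | _ i j =>
        induction e' using Sym2.ind with
        | _ k l =>
          intro he he' hQQ
          have hij : i ≠ j := by simpa using he
          have hkl : k ≠ l := by simpa using he'
          by_contra hne
          have hne2 : ¬((i = k ∧ j = l) ∨ (i = l ∧ j = k)) := fun hh =>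
            hne (Sym2.eq_iff.mpr hh)
          obtain ⟨a, b, c, hab, hac, hbc, ha, hb, hc⟩ :=
            aux_three_distinct i j k l hij hkl hne2
          have hdvd : ∀ t : Fin 4, (t = i ∨ t = j ∨ t = k ∨ t = l) →
              q i j ∣ (f t : ℕ) := by
            rintro t (rfl | rfl | rfl | rfl)
            · exact (hq t j hij).2.1
            · exact (hq i t hij).2.2
            · have : Q s(t, l) = q t l := Sym2.lift_mk _ t l
              have h2 : q i j = q t l := by
                have e1 : Q s(i, j) = q i j := Sym2.lift_mk _ i j
                rw [← e1, hQQ, this]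
              exact h2 ▸ (hq t l hkl).2.1
            · have : Q s(k, t) = q k t := Sym2.lift_mk _ k t
              have h2 : q i j = q k t := by
                have e1 : Q s(i, j) = q i j := Sym2.lift_mk _ i j
                rw [← e1, hQQ, this]
              exact h2 ▸ (hq k t hkl).2.2
          exact hc3 ⟨q i j, (hq i j hij).1, a, b, c, hab, hac, hbc,
            hdvd a ha, hdvd b hb, hdvd c hc⟩
    refine aux_containsSub (IncGraph (⊤ : SimpleGraph (Fin 4)))
      (fun _ _ hh => hh) (fun _ _ hh => hh) f
      (fun e => ⟨Q e.1, ?_⟩) hfinj ?_ ?_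
    · obtain ⟨e, he⟩ := e
      obtain ⟨hQp, hQd⟩ := hQ e he
      exact hrho _ hQp e.out.1 (hQd _ (Sym2.out_fst_mem e))
    · rintro ⟨e, he⟩ ⟨e', he'⟩ hPe
      exact Subtype.ext (hkey e e' he he' (congrArg Subtype.val hPe))
    · rintro a ⟨e, he⟩ hadj
      exact (hQ e he).2 a hadj
end

section
/- If B(X) contains a subgraph isomorphic to one of the complete bipartite graph K_{1,4}, the incidence graph Inc(K4) of the complete graph K4, the graph 𝒦, or the graph 𝒢, then at least one of Δ(X), Γ(X) contains a complete subgraph K4 on four vertices. -/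
open SimpleGraph

instance : DecidableRel graphK.Adj
  | Sum.inl _, Sum.inl _ => .isFalse fun h => h
  | Sum.inl a, Sum.inr b => inferInstanceAs (Decidable (((b : ℕ), (a : ℕ)) ∈
      [((0:ℕ), (0:ℕ)), (0, 1), (0, 2), (1, 0), (1, 1), (1, 3), (2, 2), (2, 3)]))
  | Sum.inr b, Sum.inl a => inferInstanceAs (Decidable (((b : ℕ), (a : ℕ)) ∈
      [((0:ℕ), (0:ℕ)), (0, 1), (0, 2), (1, 0), (1, 1), (1, 3), (2, 2), (2, 3)]))
  | Sum.inr _, Sum.inr _ => .isFalse fun h => h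

instance : DecidableRel graphG.Adj
  | Sum.inl _, Sum.inl _ => .isFalse fun h => h
  | Sum.inl a, Sum.inr b => inferInstanceAs (Decidable (((b : ℕ), (a : ℕ)) ∈
      [((0:ℕ), (0:ℕ)), (0, 1), (0, 2), (1, 0), (1, 3), (2, 1), (2, 3), (3, 2), (3, 3)]))
  | Sum.inr b, Sum.inl a => inferInstanceAs (Decidable (((b : ℕ), (a : ℕ)) ∈
      [((0:ℕ), (0:ℕ)), (0, 1), (0, 2), (1, 0), (1, 3), (2, 1), (2, 3), (3, 2), (3, 3)]))
  | Sum.inr _, Sum.inr _ => .isFalse fun h => h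


lemma key_lemma (X : Set ℕ) (hpos : ∀ x ∈ X, 0 < x)
    (a : Fin 4 → (↥(rho X) ⊕ ↥(Xstar X))) (ha : Function.Injective a)
    (H : ∀ i j : Fin 4, i ≠ j →
      ∃ v, (BGraph X).Adj v (a i) ∧ (BGraph X).Adj v (a j)) :
    ContainsSub (DeltaGraph X) (⊤ : SimpleGraph (Fin 4)) ∨
    ContainsSub (GammaGraph X) (⊤ : SimpleGraph (Fin 4)) := by
  rcases h0 : a 0 with p0 | x0
  · -- all images are primes
    left
    have hleft : ∀ i, ∃ p, a i = Sum.inl p := by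
      intro i
      rcases eq_or_ne i 0 with rfl | hi
      · exact ⟨p0, h0⟩
      obtain ⟨v, hvi, hv0⟩ := H i 0 hi
      rcases v with q | x
      · rw [h0] at hv0; exact hv0.elim
      · rcases hai : a i with p | y
        · exact ⟨p, rfl⟩
        · rw [hai] at hvi; exact hvi.elim
    choose g hg using hleft
    have hginj : Function.Injective g := fun i j hij => ha (by rw [hg i, hg j, hij])
    refine ⟨g, hginj, ?_⟩
    intro u v huv
    have hneq : u ≠ v := huv.ne
    obtain ⟨w, hwu, hwv⟩ := H u v hneq
    rcases w with q | x
    · rw [hg u] at hwu; exact hwu.elim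
    rw [hg u] at hwu
    rw [hg v] at hwv
    have hdu : ((g u : ℕ)) ∣ (x : ℕ) := hwu
    have hdv : ((g v : ℕ)) ∣ (x : ℕ) := hwv
    have hpu : Nat.Prime (g u : ℕ) := (g u).2.1
    have hpv : Nat.Prime (g v : ℕ) := (g v).2.1
    have hne' : (g u : ℕ) ≠ (g v : ℕ) := fun hc => hneq (hginj (Subtype.ext hc))
    exact ⟨fun hc => hneq (hginj hc), x, x.2.1,
      Nat.Coprime.mul_dvd_of_dvd_of_dvd ((Nat.coprime_primes hpu hpv).mpr hne') hdu hdv⟩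
  · -- all images are elements of X*
    right
    have hright : ∀ i, ∃ x, a i = Sum.inr x := by
      intro i
      rcases eq_or_ne i 0 with rfl | hi
      · exact ⟨x0, h0⟩
      obtain ⟨v, hvi, hv0⟩ := H i 0 hi
      rcases v with q | x
      · rcases hai : a i with p | y
        · rw [hai] at hvi; exact hvi.elim
        · exact ⟨y, rfl⟩
      · rw [h0] at hv0; exact hv0.elim
    choose g hg using hright
    have hginj : Function.Injective g := fun i j hij => ha (by rw [hg i, hg j, hij])
    refine ⟨g, hginj, ?_⟩
    intro u v huv
    have hneq : u ≠ v := huv.ne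
    obtain ⟨w, hwu, hwv⟩ := H u v hneq
    rcases w with q | x
    · rw [hg u] at hwu
      rw [hg v] at hwv
      have hdu : ((q : ℕ)) ∣ (g u : ℕ) := hwu
      have hdv : ((q : ℕ)) ∣ (g v : ℕ) := hwv
      have hq : Nat.Prime (q : ℕ) := q.2.1
      have hgu : 0 < (g u : ℕ) := hpos _ (g u).2.1
      refine ⟨fun hc => hneq (hginj hc), ?_⟩
      exact hq.one_lt.trans_le
        (Nat.le_of_dvd (Nat.gcd_pos_of_pos_left _ hgu) (Nat.dvd_gcd hdu hdv))
    · rw [hg u] at hwu; exact hwu.elim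

theorem stmt_15 (X : Set ℕ) (hne : X.Nonempty) (hpos : ∀ x ∈ X, 0 < x)
    (hX1 : X ≠ {1})
    (h : ContainsSub (BGraph X) (completeBipartiteGraph (Fin 1) (Fin 4)) ∨
         ContainsSub (BGraph X) (IncGraph (⊤ : SimpleGraph (Fin 4))) ∨
         ContainsSub (BGraph X) graphK ∨
         ContainsSub (BGraph X) graphG) :
    ContainsSub (DeltaGraph X) (⊤ : SimpleGraph (Fin 4)) ∨
    ContainsSub (GammaGraph X) (⊤ : SimpleGraph (Fin 4)) := by
  rcases h with ⟨f, hinj, hmap⟩ | ⟨f, hinj, hmap⟩ | ⟨f, hinj, hmap⟩ | ⟨f, hinj, hmap⟩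
  · refine key_lemma X hpos (fun i => f (Sum.inr i))
      (hinj.comp Sum.inr_injective) (fun i j hij => ?_)
    exact ⟨f (Sum.inl 0), hmap _ _ (by simp), hmap _ _ (by simp)⟩
  · refine key_lemma X hpos (fun i => f (Sum.inl i))
      (hinj.comp Sum.inl_injective) (fun i j hij => ?_)
    have he : s(i, j) ∈ (⊤ : SimpleGraph (Fin 4)).edgeSet := by
      rw [SimpleGraph.mem_edgeSet]; exact hij
    refine ⟨f (Sum.inr ⟨s(i, j), he⟩), hmap _ _ ?_, hmap _ _ ?_⟩
    · show i ∈ s(i, j); exact Sym2.mem_mk_left i j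
    · show j ∈ s(i, j); exact Sym2.mem_mk_right i j
  · refine key_lemma X hpos (fun i => f (Sum.inl i))
      (hinj.comp Sum.inl_injective) (fun i j hij => ?_)
    have hK : ∀ i j : Fin 4, i ≠ j → ∃ b : Fin 3,
        graphK.Adj (Sum.inr b) (Sum.inl i) ∧ graphK.Adj (Sum.inr b) (Sum.inl j) := by
      decide
    obtain ⟨b, h1, h2⟩ := hK i j hij
    exact ⟨f (Sum.inr b), hmap _ _ h1, hmap _ _ h2⟩
  · refine key_lemma X hpos (fun i => f (Sum.inl i))
      (hinj.comp Sum.inl_injective) (fun i j hij => ?_)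
    have hG : ∀ i j : Fin 4, i ≠ j → ∃ b : Fin 4,
        graphG.Adj (Sum.inr b) (Sum.inl i) ∧ graphG.Adj (Sum.inr b) (Sum.inl j) := by
      decide
    obtain ⟨b, h1, h2⟩ := hG i j hij
    exact ⟨f (Sum.inr b), hmap _ _ h1, hmap _ _ h2⟩
end
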